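/- arXiv:2111.03909 — 7 statements merged into one kernel-verified Lean document; each statement's English description precedes it below -/
import Mathlib

section
/- Let p₁ ≠ p₂ be two points of ℂ with charges ε₁, ε₂ ∈ {1, −1}. The configuration (p₁, p₂; ε₁, ε₂) is balanced if and only if ε₁ = ε₂ = −1, p₂ = −p₁, and |p₁| = 1/√2. In particular, up to a rotation of the plane about the origin, the only balanced two-point configuration is p₁ = 1/√2, p₂ = −1/√2 with ε₁ = ε₂ = −1. -/
/-- The force at a point of a configuration: `F j = conj (p j) + ∑_{k ≠ j} ε k / (p j - p k)`. -/
noncomputable def force {ι : Type*} [Fintype ι] [DecidableEq ι]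
    (p ε : ι → ℂ) (j : ι) : ℂ :=
  (starRingEnd ℂ) (p j) + ∑ k ∈ Finset.univ.erase j, ε k / (p j - p k)

/-- A configuration is balanced if all forces vanish. -/
def IsBalancedConfig {ι : Type*} [Fintype ι] [DecidableEq ι] (p ε : ι → ℂ) : Prop :=
  ∀ j, force p ε j = 0

/-- A two-point configuration `(p₁, p₂; ε₁, ε₂)` with `p₁ ≠ p₂` and charges `±1`
is balanced iff `ε₁ = ε₂ = -1`, `p₂ = -p₁` and `|p₁| = 1/√2`. -/
theorem two_point_balanced_iff (p₁ p₂ : ℂ) (hne : p₁ ≠ p₂)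
    (ε₁ ε₂ : ℂ) (hε₁ : ε₁ = 1 ∨ ε₁ = -1) (hε₂ : ε₂ = 1 ∨ ε₂ = -1) :
    IsBalancedConfig ![p₁, p₂] ![ε₁, ε₂] ↔
      (ε₁ = -1 ∧ ε₂ = -1 ∧ p₂ = -p₁ ∧ ‖p₁‖ = 1 / Real.sqrt 2) := by
  have hd : p₁ - p₂ ≠ 0 := sub_ne_zero.mpr hne
  constructor
  · intro h
    have h0 : (starRingEnd ℂ) p₁ + ε₂ / (p₁ - p₂) = 0 := by
      have := h 0; simpa [force, Finset.erase_eq, Fin.sum_univ_two] using this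
    have h1 : (starRingEnd ℂ) p₂ + ε₁ / (p₂ - p₁) = 0 := by
      have := h 1; simpa [force, Finset.erase_eq, Fin.sum_univ_two] using this
    have e1 : (starRingEnd ℂ) p₁ * (p₁ - p₂) + ε₂ = 0 := by
      field_simp at h0; linear_combination h0
    have e2 : (starRingEnd ℂ) p₂ * (p₁ - p₂) - ε₁ = 0 := by
      have hd' : p₂ - p₁ ≠ 0 := sub_ne_zero.mpr (Ne.symm hne)
      field_simp at h1; linear_combination -h1
    have hsub : (starRingEnd ℂ) (p₁ - p₂) * (p₁ - p₂) = -(ε₁ + ε₂) := by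
      rw [map_sub]; linear_combination e1 - e2
    have hnsq : ((Complex.normSq (p₁ - p₂) : ℂ)) = -(ε₁ + ε₂) := by
      rw [← hsub, mul_comm, Complex.mul_conj]
    rcases hε₁ with rfl | rfl <;> rcases hε₂ with rfl | rfl
    · exfalso
      have : ((Complex.normSq (p₁ - p₂) : ℂ)) = -2 := by rw [hnsq]; ring
      have := congrArg Complex.re this
      simp at this
      have := Complex.normSq_nonneg (p₁ - p₂); linarith
    · exfalso
      have : ((Complex.normSq (p₁ - p₂) : ℂ)) = 0 := by rw [hnsq]; ring
      have := congrArg Complex.re this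
      simp at this
      exact hd (by simpa [Complex.normSq_eq_zero] using this)
    · exfalso
      have : ((Complex.normSq (p₁ - p₂) : ℂ)) = 0 := by rw [hnsq]; ring
      have := congrArg Complex.re this
      simp at this
      exact hd (by simpa [Complex.normSq_eq_zero] using this)
    · refine ⟨rfl, rfl, ?_⟩
      have hadd : (starRingEnd ℂ) (p₁ + p₂) * (p₁ - p₂) = 0 := by
        rw [map_add]; linear_combination e1 + e2
      have hc0 : (starRingEnd ℂ) (p₁ + p₂) = 0 := by
        rcases mul_eq_zero.mp hadd with h' | h'
        · exact h'
        · exact absurd h' hd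
      have hsum : p₁ + p₂ = 0 := by
        simpa using congrArg (starRingEnd ℂ) hc0
      have hp2 : p₂ = -p₁ := by linear_combination hsum
      subst hp2
      refine ⟨rfl, ?_⟩
      have hre := congrArg Complex.re hnsq
      simp at hre
      have h4 : Complex.normSq p₁ = 1/2 := by
        have hq : Complex.normSq (p₁ - -p₁) = 4 * Complex.normSq p₁ := by
          rw [sub_neg_eq_add, ← two_mul, Complex.normSq_mul]
          norm_num [Complex.normSq_ofNat]
        rw [sub_neg_eq_add, ← two_mul] at hq
        rw [← two_mul, hq] at hre; linarith
      rw [Complex.norm_def, h4, show (1:ℝ)/2 = 2⁻¹ by norm_num, Real.sqrt_inv]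
      norm_num
  · rintro ⟨rfl, rfl, rfl, habs⟩
    have hp : p₁ ≠ 0 := by
      rintro rfl; simp at hd
    have hn : Complex.normSq p₁ = 1/2 := by
      rw [← Complex.sq_norm, habs, div_pow, one_pow,
        Real.sq_sqrt (by norm_num : (2:ℝ) ≥ 0)]
    have hc : (starRingEnd ℂ) p₁ * p₁ = 1/2 := by
      rw [mul_comm, Complex.mul_conj, hn]; norm_num
    have h2' : -p₁ - p₁ ≠ 0 := by
      intro h'; apply hd; linear_combination -h'
    have k0 : (starRingEnd ℂ) p₁ + (-1)/(p₁ - -p₁) = 0 := by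
      have e : (-1:ℂ)/(p₁ - -p₁) = -((starRingEnd ℂ) p₁) := by
        rw [div_eq_iff hd]; linear_combination 2 * hc
      rw [e]; ring
    have k1 : (starRingEnd ℂ) (-p₁) + (-1)/(-p₁ - p₁) = 0 := by
      have e : (-1:ℂ)/(-p₁ - p₁) = (starRingEnd ℂ) p₁ := by
        rw [div_eq_iff h2']; linear_combination 2 * hc
      rw [map_neg, e]; ring
    intro j
    fin_cases j
    · simpa [force, Finset.erase_eq, Fin.sum_univ_two] using k0
    · simpa [force, Finset.erase_eq, Fin.sum_univ_two] using k1
end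

section
/- (Karcher–Scherk configurations) For every integer k ≥ 2, the configuration consisting of the k points p_m = √((k−1)/2) · e^{2πim/k}, m = 0, …, k−1, all with charge ε_m = −1, is balanced. -/
/-- (Karcher–Scherk) For `k ≥ 2`, the configuration of the `k` points
`√((k-1)/2) · e^{2πim/k}`, `m = 0, …, k-1`, all with charge `-1`, is balanced. -/
theorem karcherScherk_balanced (k : ℕ) (hk : 2 ≤ k) :
    IsBalancedConfig
      (fun m : Fin k =>
        (Real.sqrt (((k : ℝ) - 1) / 2) : ℂ) *
          Complex.exp (2 * Real.pi * Complex.I / k) ^ (m : ℕ))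
      (fun _ => -1) := by
  have hk0 : k ≠ 0 := by omega
  haveI : NeZero k := ⟨hk0⟩
  set ζ : ℂ := Complex.exp (2 * Real.pi * Complex.I / k) with hζdef
  set r : ℝ := Real.sqrt (((k : ℝ) - 1) / 2) with hrdef
  have hprim : IsPrimitiveRoot ζ k := Complex.isPrimitiveRoot_exp k hk0
  have hζk : ζ ^ k = 1 := hprim.pow_eq_one
  have hζ0 : ζ ≠ 0 := Complex.exp_ne_zero _
  have hpow_mod : ∀ n : ℕ, ζ ^ (n % k) = ζ ^ n := by
    intro n
    conv_rhs => rw [← Nat.div_add_mod n k]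
    rw [pow_add, pow_mul, hζk, one_pow, one_mul]
  have hpow_add : ∀ a b : Fin k, ζ ^ ((a + b : Fin k) : ℕ) = ζ ^ (a : ℕ) * ζ ^ (b : ℕ) := by
    intro a b
    rw [Fin.add_def, hpow_mod, pow_add]
  have hne1 : ∀ m : Fin k, m ≠ 0 → ζ ^ (m : ℕ) ≠ 1 := by
    intro m hm
    have h0 : 0 < (m : ℕ) := Nat.pos_of_ne_zero (fun h => hm (Fin.ext (by simp [h])))
    exact hprim.pow_ne_one_of_pos_of_lt h0.ne' m.isLt
  have hneg : ∀ m : Fin k, ζ ^ ((-m : Fin k) : ℕ) * ζ ^ (m : ℕ) = 1 := by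
    intro m
    rw [← hpow_add, neg_add_cancel]
    simp
  -- Key sum
  have hS : ∑ m ∈ Finset.univ.erase (0 : Fin k), (1 - ζ ^ (m : ℕ))⁻¹ = ((k : ℂ) - 1) / 2 := by
    have hrefl : ∑ m ∈ Finset.univ.erase (0 : Fin k), (1 - ζ ^ (m : ℕ))⁻¹
        = ∑ m ∈ Finset.univ.erase (0 : Fin k), (1 - ζ ^ ((-m : Fin k) : ℕ))⁻¹ := by
      refine Finset.sum_nbij' (fun m => -m) (fun m => -m) ?_ ?_ ?_ ?_ ?_ <;>
        intros a ha <;> simp_all [neg_eq_zero]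
    have hterm : ∀ m ∈ Finset.univ.erase (0 : Fin k),
        (1 - ζ ^ (m : ℕ))⁻¹ + (1 - ζ ^ ((-m : Fin k) : ℕ))⁻¹ = 1 := by
      intro m hm
      have hm0 : m ≠ 0 := (Finset.mem_erase.mp hm).1
      have hz1 : ζ ^ (m : ℕ) ≠ 1 := hne1 m hm0
      have hz1' : ζ ^ ((-m : Fin k) : ℕ) ≠ 1 := by
        intro h
        have := hneg m
        rw [h, one_mul] at this
        exact hz1 this
      have h1 : (1 : ℂ) - ζ ^ (m : ℕ) ≠ 0 := sub_ne_zero.mpr (Ne.symm hz1)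
      have ha0 : ζ ^ (m : ℕ) ≠ 0 := pow_ne_zero _ hζ0
      have hb : ζ ^ ((-m : Fin k) : ℕ) = (ζ ^ (m : ℕ))⁻¹ :=
        eq_inv_of_mul_eq_one_left (hneg m)
      have ha1 : ζ ^ (m : ℕ) - 1 ≠ 0 := sub_ne_zero.mpr hz1
      rw [hb]
      have e1 : (1 : ℂ) - (ζ ^ (m : ℕ))⁻¹ = (ζ ^ (m : ℕ) - 1) * (ζ ^ (m : ℕ))⁻¹ := by
        rw [sub_mul, mul_inv_cancel₀ ha0, one_mul]
      have e2 : ((1 : ℂ) - ζ ^ (m : ℕ))⁻¹ = -((ζ ^ (m : ℕ) - 1)⁻¹) := by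
        rw [show (1 : ℂ) - ζ ^ (m : ℕ) = -(ζ ^ (m : ℕ) - 1) by ring, inv_neg]
      rw [e1, mul_inv, inv_inv, e2]
      calc -((ζ ^ (m : ℕ) - 1)⁻¹) + (ζ ^ (m : ℕ) - 1)⁻¹ * ζ ^ (m : ℕ)
          = (ζ ^ (m : ℕ) - 1)⁻¹ * (ζ ^ (m : ℕ) - 1) := by ring
        _ = 1 := inv_mul_cancel₀ ha1
    have h2 : (2 : ℂ) * (∑ m ∈ Finset.univ.erase (0 : Fin k), (1 - ζ ^ (m : ℕ))⁻¹)
        = (k : ℂ) - 1 := by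
      rw [two_mul]
      nth_rewrite 2 [hrefl]
      rw [← Finset.sum_add_distrib, Finset.sum_congr rfl hterm, Finset.sum_const,
        Finset.card_erase_of_mem (Finset.mem_univ _), Finset.card_univ, Fintype.card_fin]
      rw [nsmul_eq_mul, mul_one]
      push_cast [Nat.cast_sub (by omega : 1 ≤ k)]
      ring
    rw [eq_div_iff (two_ne_zero : (2 : ℂ) ≠ 0)]
    linear_combination h2
  intro j
  simp only [force]
  have hζj : ζ ^ (j : ℕ) ≠ 0 := pow_ne_zero _ hζ0
  have hrnn : (0 : ℝ) ≤ ((k : ℝ) - 1) / 2 := by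
    have : (2 : ℝ) ≤ (k : ℝ) := by exact_mod_cast hk
    linarith
  have hrpos : 0 < r := Real.sqrt_pos.mpr (by
    have : (2 : ℝ) ≤ (k : ℝ) := by exact_mod_cast hk
    linarith)
  have hr0 : (r : ℂ) ≠ 0 := by exact_mod_cast hrpos.ne'
  have hr2 : (r : ℂ) ^ 2 = ((k : ℂ) - 1) / 2 := by
    have h := Real.sq_sqrt hrnn
    calc (r : ℂ) ^ 2 = ((r ^ 2 : ℝ) : ℂ) := by push_cast; ring
      _ = ((((k : ℝ) - 1) / 2 : ℝ) : ℂ) := by rw [hrdef, h]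
      _ = ((k : ℂ) - 1) / 2 := by push_cast; ring
  -- conjugate of ζ is ζ⁻¹
  have hconj : (starRingEnd ℂ) ζ = ζ⁻¹ := by
    rw [hζdef, ← Complex.exp_conj, ← Complex.exp_neg]
    congr 1
    rw [map_div₀, map_mul, map_mul, Complex.conj_I, map_ofNat, Complex.conj_ofReal,
      map_natCast]
    ring
  have hconjp : (starRingEnd ℂ) ((r : ℂ) * ζ ^ (j : ℕ)) = (r : ℂ) * (ζ ^ (j : ℕ))⁻¹ := by
    rw [map_mul, map_pow, hconj, Complex.conj_ofReal, inv_pow]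
  rw [hconjp]
  -- rewrite the sum
  have hsum : ∑ m ∈ Finset.univ.erase j,
      (-1 : ℂ) / ((r : ℂ) * ζ ^ (j : ℕ) - (r : ℂ) * ζ ^ (m : ℕ))
      = (-1 / ((r : ℂ) * ζ ^ (j : ℕ))) *
        ∑ m ∈ Finset.univ.erase (0 : Fin k), (1 - ζ ^ (m : ℕ))⁻¹ := by
    rw [Finset.mul_sum]
    refine Finset.sum_nbij' (fun m => m - j) (fun n => n + j) ?_ ?_ ?_ ?_ ?_
    · intro a ha
      simp only [Finset.mem_erase, Finset.mem_univ, and_true] at ha ⊢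
      exact sub_ne_zero.mpr ha
    · intro a ha
      simp only [Finset.mem_erase, Finset.mem_univ, and_true] at ha ⊢
      intro h
      exact ha (add_right_cancel (h.trans (zero_add j).symm))
    · intro a _; exact sub_add_cancel a j
    · intro a _; exact add_sub_cancel_right a j
    · intro m hm
      have hmj : m ≠ j := (Finset.mem_erase.mp hm).1
      have hkey : ζ ^ ((m - j : Fin k) : ℕ) * ζ ^ (j : ℕ) = ζ ^ (m : ℕ) := by
        rw [← hpow_add]
        congr 1
        rw [sub_add_cancel]
      have hne : ζ ^ ((m - j : Fin k) : ℕ) ≠ 1 := by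
        apply hne1
        exact sub_ne_zero.mpr hmj
      have h1 : (1 : ℂ) - ζ ^ ((m - j : Fin k) : ℕ) ≠ 0 := sub_ne_zero.mpr (Ne.symm hne)
      have hfac : (r : ℂ) * ζ ^ (j : ℕ) - (r : ℂ) * ζ ^ (m : ℕ)
          = (r : ℂ) * ζ ^ (j : ℕ) * (1 - ζ ^ ((m - j : Fin k) : ℕ)) := by
        linear_combination (r : ℂ) * hkey
      rw [hfac, div_mul_eq_div_div, div_eq_mul_inv]
  rw [hsum, hS]
  field_simp
  linear_combination 2 * hr2
end

section
/- (Twisted Fischer–Koch configurations, negative center) For every integer k ≥ 2, the configuration consisting of k + 1 points, namely the origin 0 with charge −1 together with the k points √((k+1)/2) · e^{2πim/k}, m = 0, …, k−1, each with charge −1, is balanced. -/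
open Finset Complex

lemma inv_one_sub_add (z : ℂ) (h0 : z ≠ 0) (h1 : z ≠ 1) :
    (1 - z)⁻¹ + (1 - z⁻¹)⁻¹ = 1 := by
  have h1' : 1 - z ≠ 0 := sub_ne_zero.mpr (fun h => h1 h.symm)
  have h2' : 1 - z⁻¹ ≠ 0 := by
    rw [sub_ne_zero]
    intro h
    exact h1 (by rw [← inv_inv z, ← h, inv_one])
  have hz1 : z - 1 ≠ 0 := sub_ne_zero.mpr h1
  have e2 : (1 - z⁻¹) = (z - 1) * z⁻¹ := by field_simp
  rw [e2, mul_inv, inv_inv, show (1:ℂ) - z = -(z - 1) by ring, inv_neg]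
  linear_combination mul_inv_cancel₀ hz1

lemma sum_inv_one_sub_pow {ζ : ℂ} {k : ℕ} (hk2 : 2 ≤ k) (hζ0 : ζ ≠ 0)
    (hζk : ζ ^ k = 1) (hne : ∀ j, 0 < j → j < k → ζ ^ j ≠ 1) :
    ∑ j ∈ Finset.Ico 1 k, (1 - ζ ^ j)⁻¹ = ((k : ℂ) - 1) / 2 := by
  have key : ∑ j ∈ Finset.Ico 1 k, (1 - ζ ^ j)⁻¹
      = ∑ j ∈ Finset.Ico 1 k, (1 - ζ ^ (k - j))⁻¹ := by
    refine Finset.sum_nbij' (fun j => k - j) (fun j => k - j) ?_ ?_ ?_ ?_ ?_ <;>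
      intro a ha <;> simp only [Finset.mem_Ico] at ha ⊢
    · omega
    · omega
    · omega
    · omega
    · have : k - (k - a) = a := by omega
      rw [this]
  have h2 : (∑ j ∈ Finset.Ico 1 k, (1 - ζ ^ j)⁻¹) + (∑ j ∈ Finset.Ico 1 k, (1 - ζ ^ j)⁻¹)
      = (k : ℂ) - 1 := by
    nth_rewrite 2 [key]
    rw [← Finset.sum_add_distrib]
    have hterm : ∀ j ∈ Finset.Ico 1 k, (1 - ζ ^ j)⁻¹ + (1 - ζ ^ (k - j))⁻¹ = 1 := by
      intro j hj
      rw [Finset.mem_Ico] at hj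
      have hzk : ζ ^ (k - j) = (ζ ^ j)⁻¹ := by
        rw [pow_sub₀ ζ hζ0 hj.2.le, hζk, one_mul]
      rw [hzk]
      exact inv_one_sub_add _ (pow_ne_zero _ hζ0) (hne j hj.1 hj.2)
    rw [Finset.sum_congr rfl hterm, Finset.sum_const, Nat.card_Ico, nsmul_eq_mul, mul_one]
    have : (1:ℕ) ≤ k := by omega
    push_cast [this]
    ring
  linear_combination h2 / 2

/-- (Twisted Fischer–Koch, negative center) For `k ≥ 2`, the configuration of the origin
with charge `-1` together with the `k` points `√((k+1)/2) · e^{2πim/k}`, `m = 0, …, k-1`,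
each with charge `-1`, is balanced.  (The index `none` is the origin.) -/
theorem fischerKoch_neg_center_balanced (k : ℕ) (hk : 2 ≤ k) :
    IsBalancedConfig
      (fun i : Option (Fin k) =>
        match i with
        | none => 0
        | some m =>
            (Real.sqrt (((k : ℝ) + 1) / 2) : ℂ) *
              Complex.exp (2 * Real.pi * Complex.I / k) ^ (m : ℕ))
      (fun _ => -1) := by
  have hk0 : (k : ℂ) ≠ 0 := Nat.cast_ne_zero.mpr (by omega)
  set ζ : ℂ := Complex.exp (2 * ↑Real.pi * Complex.I / ↑k) with hζdef
  have hζ0 : ζ ≠ 0 := Complex.exp_ne_zero _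
  have hζk : ζ ^ k = 1 := by
    rw [hζdef, ← Complex.exp_nat_mul,
      show (k:ℂ) * (2 * ↑Real.pi * Complex.I / ↑k) = 2 * ↑Real.pi * Complex.I by
        field_simp]
    exact Complex.exp_two_pi_mul_I
  have hprim : IsPrimitiveRoot ζ k := Complex.isPrimitiveRoot_exp k (by omega)
  have hne : ∀ j, 0 < j → j < k → ζ ^ j ≠ 1 :=
    fun j hj hjk => hprim.pow_ne_one_of_pos_of_lt hj.ne' hjk
  have hζ1 : ζ ≠ 1 := by simpa using hne 1 one_pos (by omega)
  set r : ℝ := Real.sqrt (((k:ℝ)+1)/2) with hrdef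
  have hr0 : (0:ℝ) < r := Real.sqrt_pos.mpr (by positivity)
  have hrC : (r:ℂ) ≠ 0 := by exact_mod_cast hr0.ne'
  have hr2 : (r:ℂ)^2 = ((k:ℂ)+1)/2 := by
    have h : r^2 = ((k:ℝ)+1)/2 := Real.sq_sqrt (by positivity)
    rw [← Complex.ofReal_pow, h]
    push_cast
    ring
  have hconj : (starRingEnd ℂ) ζ = ζ⁻¹ := by
    rw [hζdef, ← Complex.exp_conj, ← Complex.exp_neg]
    congr 1
    simp only [map_div₀, map_mul, Complex.conj_I, map_ofNat, Complex.conj_ofReal, map_natCast]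
    ring
  have hpowmod : ∀ a : ℕ, ζ ^ (a % k) = ζ ^ a := by
    intro a
    conv_rhs => rw [← Nat.div_add_mod a k]
    rw [pow_add, pow_mul, hζk, one_pow, one_mul]
  have hS : ∑ n : Fin k, (1 - ζ ^ (n:ℕ))⁻¹ = ((k : ℂ) - 1) / 2 := by
    rw [Fin.sum_univ_eq_sum_range (fun n => (1 - ζ ^ n)⁻¹) k, Finset.range_eq_Ico,
      Finset.sum_eq_sum_Ico_succ_bot (by omega : 0 < k)]
    rw [sum_inv_one_sub_pow hk hζ0 hζk hne]
    simp
  intro j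
  unfold force
  rw [Finset.sum_erase_eq_sub (Finset.mem_univ j)]
  rw [Fintype.sum_option]
  match j with
  | none =>
    simp only [map_zero, sub_self, div_zero, sub_zero, zero_sub, zero_add]
    have : ∀ m : Fin k, (-1 : ℂ) / -((r:ℂ) * ζ ^ (m:ℕ)) = (r:ℂ)⁻¹ * (ζ⁻¹) ^ (m:ℕ) := by
      intro m
      rw [div_neg, neg_div, neg_neg, one_div, mul_inv, inv_pow]
    rw [Finset.sum_congr rfl (fun m _ => this m), ← Finset.mul_sum]
    have hgeo : ∑ m : Fin k, (ζ⁻¹) ^ (m:ℕ) = 0 := by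
      rw [Fin.sum_univ_eq_sum_range, geom_sum_eq (fun h => hζ1 (by
        rw [← inv_inv ζ, h, inv_one])), inv_pow, hζk, inv_one, sub_self, zero_div]
    rw [hgeo, mul_zero]
  | some m =>
    haveI : NeZero k := ⟨by omega⟩
    have hzm0 : ζ ^ (m:ℕ) ≠ 0 := pow_ne_zero _ hζ0
    have hsum : ∑ n : Fin k, (-1 : ℂ) / ((r:ℂ) * ζ ^ (m:ℕ) - (r:ℂ) * ζ ^ (n:ℕ))
        = -((r:ℂ) * ζ ^ (m:ℕ))⁻¹ * (((k:ℂ) - 1) / 2) := by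
      have hre : ∑ n : Fin k, (-1 : ℂ) / ((r:ℂ) * ζ ^ (m:ℕ) - (r:ℂ) * ζ ^ (n:ℕ))
          = ∑ n : Fin k, (-1 : ℂ) / ((r:ℂ) * ζ ^ (m:ℕ) - (r:ℂ) * ζ ^ (((m + n : Fin k)):ℕ)) := by
        exact (Fintype.sum_equiv (Equiv.addLeft m)
          (fun n => (-1 : ℂ) / ((r:ℂ) * ζ ^ (m:ℕ) - (r:ℂ) * ζ ^ (((m + n : Fin k)):ℕ)))
          _ (fun n => rfl)).symm
      rw [hre]
      have hterm : ∀ n : Fin k,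
          (-1 : ℂ) / ((r:ℂ) * ζ ^ (m:ℕ) - (r:ℂ) * ζ ^ (((m + n : Fin k)):ℕ))
          = -((r:ℂ) * ζ ^ (m:ℕ))⁻¹ * (1 - ζ ^ (n:ℕ))⁻¹ := by
        intro n
        have : ζ ^ (((m + n : Fin k)):ℕ) = ζ ^ (m:ℕ) * ζ ^ (n:ℕ) := by
          rw [Fin.val_add, hpowmod, pow_add]
        rw [this, show (r:ℂ) * ζ ^ (m:ℕ) - (r:ℂ) * (ζ ^ (m:ℕ) * ζ ^ (n:ℕ))
            = ((r:ℂ) * ζ ^ (m:ℕ)) * (1 - ζ ^ (n:ℕ)) by ring]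
        rw [div_eq_mul_inv, mul_inv, neg_one_mul, neg_mul]
      rw [Finset.sum_congr rfl (fun n _ => hterm n), ← Finset.mul_sum, hS]
    have hconjp : (starRingEnd ℂ) ((r:ℂ) * ζ ^ (m:ℕ)) = (r:ℂ) * ((ζ ^ (m:ℕ))⁻¹) := by
      rw [map_mul, map_pow, hconj, Complex.conj_ofReal, inv_pow]
    simp only []
    rw [hconjp, hsum]
    rw [sub_self, div_zero, sub_zero, sub_zero]
    rw [mul_inv]
    field_simp
    linear_combination 2 * hr2
end

section
/- (Simplification of forces for simply dihedral configurations) Let k ≥ 2, φ = e^{2πi/k}, and let 0 < p_{11} < … < p_{1n₁} and 0 < p_{21} < … < p_{2n₂} be real numbers with charges ε_{1l}, ε_{2l} ∈ {1, −1}, and let ε₀ ∈ {−1, 0, 1}. Consider the configuration whose points are p_{1l}·φ^m with charge ε_{1l} (l = 1, …, n₁, m = 0, …, k−1), p_{2l}·e^{iπ/k}·φ^m with charge ε_{2l} (l = 1, …, n₂, m = 0, …, k−1), together with the origin with charge ε₀ when ε₀ ≠ 0. Then the force of this configuration at the point p_{1j} is the real number p_{1j} + ((k−1)ε_{1j} +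 2ε₀)/(2p_{1j}) + Σ_{l≠j} ε_{1l}·k·p_{1j}^{k−1}/(p_{1j}^k − p_{1l}^k) + Σ_{l=1}^{n₂} ε_{2l}·k·p_{1j}^{k−1}/(p_{1j}^k + p_{2l}^k). -/
open Finset

-- product formula: ∏_{m<k} (x - a φ^m) = x^k - a^k for φ primitive k-th root
lemma prod_X_sub_pow {k : ℕ} (hk : 0 < k) {φ : ℂ} (hφ : IsPrimitiveRoot φ k) (x : ℂ) :
    ∏ m ∈ range k, (x - φ ^ m) = x ^ k - 1 := by
  have himg : (range k).image (φ ^ ·) = Polynomial.nthRootsFinset k (1 : ℂ) := by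
    apply Finset.eq_of_subset_of_card_le
    · intro z hz
      simp only [mem_image, mem_range] at hz
      obtain ⟨m, hm, rfl⟩ := hz
      rw [Polynomial.mem_nthRootsFinset hk, ← pow_mul, mul_comm, pow_mul, hφ.pow_eq_one, one_pow]
    · rw [hφ.card_nthRootsFinset, Finset.card_image_of_injOn]
      · simp
      · intro a ha b hb hab
        simp only [mem_coe, mem_range] at ha hb
        exact hφ.pow_inj ha hb hab
  have := congrArg (Polynomial.eval x) (Polynomial.X_pow_sub_one_eq_prod hk hφ)
  simp only [Polynomial.eval_sub, Polynomial.eval_pow, Polynomial.eval_X, Polynomial.eval_one,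
    Polynomial.eval_prod, Polynomial.eval_sub, Polynomial.eval_C] at this
  rw [this, ← himg, Finset.prod_image]
  intro a ha b hb hab
  exact hφ.pow_inj (mem_range.mp ha) (mem_range.mp hb) hab

lemma prod_sub_pow {k : ℕ} (hk : 0 < k) {φ : ℂ} (hφ : IsPrimitiveRoot φ k) (a x : ℂ) :
    ∏ m ∈ range k, (x - a * φ ^ m) = x ^ k - a ^ k := by
  rcases eq_or_ne a 0 with rfl | ha
  · simp [Finset.prod_const, hk.ne']
  · have := prod_X_sub_pow hk hφ (x / a)
    have h2 : ∏ m ∈ range k, (x - a * φ ^ m) = a ^ k * ∏ m ∈ range k, (x / a - φ ^ m) := by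
      have : ∀ m ∈ range k, x - a * φ ^ m = a * (x / a - φ ^ m) := by
        intro m _; field_simp
      rw [Finset.prod_congr rfl this, Finset.prod_mul_distrib, Finset.prod_const,
        Finset.card_range]
    rw [h2, this, div_pow]
    field_simp

-- derivative identity: ∑_m ∏_{m'≠m} (x - a φ^{m'}) = k x^{k-1}
lemma sum_prod_erase {k : ℕ} (hk : 0 < k) {φ : ℂ} (hφ : IsPrimitiveRoot φ k) (a x : ℂ) :
    ∑ m ∈ range k, ∏ m' ∈ (range k).erase m, (x - a * φ ^ m') = k * x ^ (k - 1) := by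
  have h1 : HasDerivAt (fun y : ℂ => ∏ m ∈ range k, (y - a * φ ^ m))
      (∑ m ∈ range k, (∏ m' ∈ (range k).erase m, (x - a * φ ^ m')) • (1 : ℂ)) x := by
    apply HasDerivAt.fun_finsetProd
    intro i _
    simpa using (hasDerivAt_id x).sub_const (a * φ ^ i)
  have h2 : HasDerivAt (fun y : ℂ => ∏ m ∈ range k, (y - a * φ ^ m)) ((k : ℂ) * x ^ (k - 1)) x := by
    have : (fun y : ℂ => ∏ m ∈ range k, (y - a * φ ^ m)) = fun y => y ^ k - a ^ k := by
      funext y; exact prod_sub_pow hk hφ a y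
    rw [this]
    simpa using (hasDerivAt_pow k x).sub_const (a ^ k)
  have := h1.unique h2
  simpa using this

lemma sum_inv_roots {k : ℕ} (hk : 0 < k) {φ : ℂ} (hφ : IsPrimitiveRoot φ k) {a x : ℂ}
    (h : x ^ k ≠ a ^ k) :
    ∑ m ∈ range k, 1 / (x - a * φ ^ m) = k * x ^ (k - 1) / (x ^ k - a ^ k) := by
  have hne : ∀ m ∈ range k, x - a * φ ^ m ≠ 0 := by
    intro m _ h0
    apply h
    have : x = a * φ ^ m := by linear_combination h0
    rw [this, mul_pow, ← pow_mul, mul_comm m k, pow_mul, hφ.pow_eq_one, one_pow, mul_one]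
  have key : ∀ m ∈ range k, 1 / (x - a * φ ^ m)
      = (∏ m' ∈ (range k).erase m, (x - a * φ ^ m')) / (x ^ k - a ^ k) := by
    intro m hm
    rw [eq_div_iff (sub_ne_zero.mpr h), ← prod_sub_pow hk hφ a x,
      ← Finset.prod_erase_mul _ _ hm]
    field_simp [hne m hm]
  rw [Finset.sum_congr rfl key, ← Finset.sum_div, sum_prod_erase hk hφ a x]

lemma pair_helper {z : ℂ} (hz0 : z ≠ 0) (hz1 : z ≠ 1) : 1/(1-z) + 1/(1-z⁻¹) = 1 := by
  have h1 : 1 - z ≠ 0 := sub_ne_zero.mpr (Ne.symm hz1)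
  have h2 : 1 - z⁻¹ ≠ 0 := by
    intro h
    exact hz1 (inv_eq_one.mp (by linear_combination -h))
  have h3 : 1 - z⁻¹ = (z - 1) / z := by field_simp
  have h4 : z - 1 ≠ 0 := sub_ne_zero.mpr hz1
  rw [h3, one_div_div]
  field_simp [h1, h4]
  ring

lemma sum_inv_one_sub {k : ℕ} (hk : 2 ≤ k) {φ : ℂ} (hφ : IsPrimitiveRoot φ k) :
    ∑ m ∈ Finset.Ico 1 k, 1 / (1 - φ ^ m) = ((k : ℂ) - 1) / 2 := by
  set f : ℕ → ℂ := fun m => 1 / (1 - φ ^ m) with hf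
  have hS : ∑ m ∈ Finset.Ico 1 k, f m = ∑ i ∈ range (k - 1), f (1 + i) := by
    rw [Finset.sum_Ico_eq_sum_range]
  have hrefl : ∑ i ∈ range (k - 1), f (1 + i) = ∑ i ∈ range (k - 1), f (k - 1 - i) := by
    rw [← Finset.sum_range_reflect]
    apply Finset.sum_congr rfl
    intro i hi
    rw [mem_range] at hi
    congr 1
    omega
  have hpair : ∀ i ∈ range (k - 1), f (1 + i) + f (k - 1 - i) = 1 := by
    intro i hi
    rw [mem_range] at hi
    set m := 1 + i with hm
    have h1 : (1:ℕ) ≤ m := by omega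
    have h2 : m < k := by omega
    have hkm : k - 1 - i = k - m := by omega
    rw [hkm]
    have hz1 : φ ^ m ≠ 1 := hφ.pow_ne_one_of_pos_of_lt (by omega) h2
    have hz0 : φ ^ m ≠ 0 := pow_ne_zero _ (hφ.ne_zero (by omega))
    have hinv : φ ^ (k - m) = (φ ^ m)⁻¹ := by
      have : φ ^ (k - m) * φ ^ m = 1 := by
        rw [← pow_add]
        have h3 : k - m + m = k := by omega
        rw [h3, hφ.pow_eq_one]
      exact eq_inv_of_mul_eq_one_left this
    rw [hf]
    simp only [hinv]
    exact pair_helper hz0 hz1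
  have h2S : (∑ m ∈ Finset.Ico 1 k, f m) + (∑ m ∈ Finset.Ico 1 k, f m) = (k : ℂ) - 1 := by
    rw [hS]
    nth_rewrite 2 [hrefl]
    rw [← Finset.sum_add_distrib, Finset.sum_congr rfl hpair, Finset.sum_const,
      Finset.card_range, nsmul_eq_mul, mul_one]
    push_cast [Nat.cast_sub (by omega : 1 ≤ k)]
    ring
  have := h2S
  field_simp
  linear_combination this

/-- (Simplification of forces for simply dihedral configurations)
For the configuration whose points are `p₁ l · φ^m` with charge `ε₁ l`,
`p₂ l · e^{iπ/k} · φ^m` with charge `ε₂ l` (where `φ = e^{2πi/k}`), together with the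
origin carrying charge `ε₀ ∈ {-1, 0, 1}` (charge `0` meaning no central point, which
contributes nothing to the forces at the other points), the force at the point `p₁ j`
is the stated real number. -/
theorem dihedral_force_formula (k n₁ n₂ : ℕ) (hk : 2 ≤ k)
    (p₁ : Fin n₁ → ℝ) (p₂ : Fin n₂ → ℝ)
    (hp₁ : ∀ l, 0 < p₁ l) (hp₂ : ∀ l, 0 < p₂ l)
    (hp₁mono : StrictMono p₁) (hp₂mono : StrictMono p₂)
    (ε₁ : Fin n₁ → ℝ) (ε₂ : Fin n₂ → ℝ)
    (hε₁ : ∀ l, ε₁ l = 1 ∨ ε₁ l = -1) (hε₂ : ∀ l, ε₂ l = 1 ∨ ε₂ l = -1)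
    (ε₀ : ℝ) (hε₀ : ε₀ = -1 ∨ ε₀ = 0 ∨ ε₀ = 1) (j : Fin n₁) :
    force
      (fun i : (Fin n₁ × Fin k) ⊕ (Fin n₂ × Fin k) ⊕ Unit =>
        match i with
        | Sum.inl (l, m) =>
            (p₁ l : ℂ) * Complex.exp (2 * Real.pi * Complex.I / k) ^ (m : ℕ)
        | Sum.inr (Sum.inl (l, m)) =>
            (p₂ l : ℂ) * Complex.exp (Real.pi * Complex.I / k) *
              Complex.exp (2 * Real.pi * Complex.I / k) ^ (m : ℕ)
        | Sum.inr (Sum.inr _) => 0)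
      (fun i =>
        match i with
        | Sum.inl (l, _) => (ε₁ l : ℂ)
        | Sum.inr (Sum.inl (l, _)) => (ε₂ l : ℂ)
        | Sum.inr (Sum.inr _) => (ε₀ : ℂ))
      (Sum.inl (j, ⟨0, by omega⟩)) =
    ((p₁ j + ((k - 1) * ε₁ j + 2 * ε₀) / (2 * p₁ j)
        + ∑ l ∈ Finset.univ.erase j,
            ε₁ l * k * p₁ j ^ (k - 1) / (p₁ j ^ k - p₁ l ^ k)
        + ∑ l, ε₂ l * k * p₁ j ^ (k - 1) / (p₁ j ^ k + p₂ l ^ k) : ℝ) : ℂ) := by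
  have hk0 : k ≠ 0 := by omega
  set φ : ℂ := Complex.exp (2 * Real.pi * Complex.I / k) with hφdef
  have hφ : IsPrimitiveRoot φ k := Complex.isPrimitiveRoot_exp k hk0
  have hP0 : (p₁ j : ℂ) ≠ 0 := by exact_mod_cast (hp₁ j).ne'
  rw [force, Finset.sum_erase _ (by simp)]
  rw [Fintype.sum_sum_type, Fintype.sum_sum_type, Fintype.sum_prod_type]
  simp only [Fintype.sum_prod_type, pow_zero, mul_one, Complex.conj_ofReal, sub_zero,
    Finset.univ_unique, Finset.sum_singleton]
  have hmain : ∀ (e : ℝ) (a : ℂ), ((p₁ j : ℂ))^k ≠ a^k →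
      ∑ m : Fin k, (e:ℂ) / ((p₁ j:ℂ) - a * φ ^ (m:ℕ))
        = (e:ℂ) * k * (p₁ j:ℂ)^(k-1) / ((p₁ j:ℂ)^k - a^k) := by
    intro e a h
    have h1 : ∀ m : Fin k, (e:ℂ)/((p₁ j:ℂ) - a*φ^(m:ℕ))
        = (e:ℂ) * (1/((p₁ j:ℂ) - a*φ^(m:ℕ))) := fun m => by rw [mul_one_div]
    rw [Finset.sum_congr rfl (fun m _ => h1 m), ← Finset.mul_sum,
      Fin.sum_univ_eq_sum_range (fun m => 1/((p₁ j:ℂ) - a*φ^m)),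
      sum_inv_roots (by omega) hφ h]
    ring
  have ha : ∀ x : Fin n₂,
      ((p₂ x : ℂ) * Complex.exp (Real.pi * Complex.I / k))^k = -((p₂ x:ℂ))^k := by
    intro x
    rw [mul_pow, ← Complex.exp_nat_mul]
    have hc : (k:ℂ) * (Real.pi * Complex.I / k) = Real.pi * Complex.I := by
      have : (k:ℂ) ≠ 0 := Nat.cast_ne_zero.mpr hk0
      field_simp
    rw [hc, Complex.exp_pi_mul_I]
    ring
  have hne2 : ∀ x : Fin n₂,
      ((p₁ j:ℂ))^k ≠ ((p₂ x : ℂ) * Complex.exp (Real.pi * Complex.I / k))^k := by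
    intro x
    rw [ha x]
    intro hc
    have hr : p₁ j ^ k = -(p₂ x ^ k) := by exact_mod_cast hc
    nlinarith [pow_pos (hp₁ j) k, pow_pos (hp₂ x) k]
  have hne1 : ∀ l, l ≠ j → ((p₁ j:ℂ))^k ≠ ((p₁ l:ℂ))^k := by
    intro l hl hc
    have hr : p₁ j ^ k = p₁ l ^ k := by exact_mod_cast hc
    have hne : p₁ j ≠ p₁ l := fun h => hl (hp₁mono.injective h.symm)
    rcases lt_or_gt_of_ne hne with h|h
    · exact absurd hr (ne_of_lt (pow_lt_pow_left₀ h (hp₁ j).le hk0))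
    · exact absurd hr.symm (ne_of_lt (pow_lt_pow_left₀ h (hp₁ l).le hk0))
  have hdiag : ∑ m : Fin k, (ε₁ j:ℂ) / ((p₁ j:ℂ) - (p₁ j:ℂ) * φ ^ (m:ℕ))
      = (ε₁ j:ℂ) * ((k:ℂ)-1) / (2*(p₁ j:ℂ)) := by
    have h1 : ∀ m : Fin k, (ε₁ j:ℂ)/((p₁ j:ℂ) - (p₁ j:ℂ)*φ^(m:ℕ))
        = ((ε₁ j:ℂ)/(p₁ j:ℂ)) * (1/(1 - φ^(m:ℕ))) := by
      intro m
      rw [show (p₁ j:ℂ) - (p₁ j:ℂ)*φ^(m:ℕ) = (p₁ j:ℂ) * (1 - φ^(m:ℕ)) by ring,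
        div_mul_eq_div_div, div_eq_mul_one_div]
    rw [Finset.sum_congr rfl (fun m _ => h1 m), ← Finset.mul_sum,
      Fin.sum_univ_eq_sum_range (fun m => 1/(1 - φ^m)), Finset.range_eq_Ico,
      Finset.sum_eq_sum_Ico_succ_bot (by omega : 0 < k), pow_zero, sub_self,
      div_zero, zero_add, sum_inv_one_sub hk hφ]
    rw [div_mul_div_comm, mul_comm ((p₁ j : ℂ)) 2]
  have hfam1 : ∑ l ∈ Finset.univ.erase j, ∑ m : Fin k,
        (ε₁ l:ℂ) / ((p₁ j:ℂ) - (p₁ l:ℂ) * φ ^ (m:ℕ))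
      = ∑ l ∈ Finset.univ.erase j,
        (ε₁ l:ℂ) * k * (p₁ j:ℂ)^(k-1) / ((p₁ j:ℂ)^k - (p₁ l:ℂ)^k) :=
    Finset.sum_congr rfl
      (fun l hl => hmain (ε₁ l) _ (hne1 l (Finset.ne_of_mem_erase hl)))
  have hfam2 : ∑ x : Fin n₂, ∑ m : Fin k,
        (ε₂ x:ℂ) / ((p₁ j:ℂ) - (p₂ x:ℂ) * Complex.exp (Real.pi * Complex.I / k) * φ ^ (m:ℕ))
      = ∑ x : Fin n₂,
        (ε₂ x:ℂ) * k * (p₁ j:ℂ)^(k-1) / ((p₁ j:ℂ)^k + (p₂ x:ℂ)^k) := by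
    refine Finset.sum_congr rfl (fun x _ => ?_)
    rw [hmain (ε₂ x) ((p₂ x:ℂ) * Complex.exp (Real.pi * Complex.I / k)) (hne2 x), ha x,
      sub_neg_eq_add]
  rw [← Finset.add_sum_erase _ _ (Finset.mem_univ j), hdiag, hfam1, hfam2]
  push_cast
  have hsc : (ε₁ j : ℂ) * ((k:ℂ) - 1) / (2 * (p₁ j:ℂ)) + (ε₀:ℂ) / (p₁ j:ℂ)
      = (((k:ℂ) - 1) * (ε₁ j:ℂ) + 2 * (ε₀:ℂ)) / (2 * (p₁ j:ℂ)) := by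
    field_simp
  linear_combination hsc
end

section
/- (Hermite-type balanced configurations) Let n ≥ 1, k ≥ 2 be integers and ε₀ ∈ {−1, 0, 1}, with k ≥ 4 in case ε₀ = 1. Let φ = e^{2πi/k}. Then there exist real numbers 0 < p₁ < p₂ < … < pₙ such that the configuration whose points are p_l·φ^m for l = 1, …, n and m = 0, …, k−1, all with charge −1, together with the origin with charge ε₀ when ε₀ ≠ 0, is balanced. -/
open Finset Polynomial Real


lemma prod_sub_root_mul (k : ℕ) (hk : 0 < k) {φ : ℂ} (h : IsPrimitiveRoot φ k)
    (y z : ℂ) : ∏ m ∈ range k, (z - y * φ ^ m) = z ^ k - y ^ k := by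
  have himg : (range k).image (φ ^ ·) = nthRootsFinset k (1 : ℂ) := by
    apply Finset.eq_of_subset_of_card_le
    · intro ζ hζ
      simp only [mem_image, mem_range] at hζ
      obtain ⟨m, hm, rfl⟩ := hζ
      exact (mem_nthRootsFinset hk 1).2 (by rw [← pow_mul, mul_comm, pow_mul, h.pow_eq_one, one_pow])
    · rw [h.card_nthRootsFinset, Finset.card_image_of_injOn]
      · simp
      · intro a ha b hb hab
        simp only [coe_range, Set.mem_Iio] at ha hb
        exact h.pow_inj ha hb hab
  rw [h.pow_sub_pow_eq_prod_sub_mul z y hk, ← himg, Finset.prod_image]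
  · exact Finset.prod_congr rfl fun m _ => by ring_nf
  · intro a ha b hb hab
    simp only [coe_range, Set.mem_Iio] at ha hb
    exact h.pow_inj ha hb hab

lemma sum_inv_sub_roots (k : ℕ) (hk : 0 < k) {φ : ℂ} (h : IsPrimitiveRoot φ k)
    (x y : ℂ) (hxy : x ^ k ≠ y ^ k) :
    ∑ m ∈ range k, 1 / (x - y * φ ^ m) = k * x ^ (k - 1) / (x ^ k - y ^ k) := by
  have hne : ∀ m ∈ range k, x - y * φ ^ m ≠ 0 := by
    intro m hm hzero
    apply sub_ne_zero.2 hxy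
    rw [← prod_sub_root_mul k hk h y x]
    exact Finset.prod_eq_zero hm hzero
  have hder : ∑ m ∈ range k, ∏ m' ∈ (range k).erase m, (x - y * φ ^ m') = k * x ^ (k - 1) := by
    have h1 : HasDerivAt (fun z : ℂ => ∏ m ∈ range k, (z - y * φ ^ m))
        (∑ m ∈ range k, (∏ m' ∈ (range k).erase m, (x - y * φ ^ m')) • (1:ℂ)) x := by
      apply HasDerivAt.fun_finsetProd
      intro i _
      simpa using (hasDerivAt_id x).sub_const (y * φ ^ i)
    have h2 : HasDerivAt (fun z : ℂ => ∏ m ∈ range k, (z - y * φ ^ m))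
        ((k : ℂ) * x ^ (k - 1)) x := by
      have : (fun z : ℂ => ∏ m ∈ range k, (z - y * φ ^ m)) = fun z => z ^ k - y ^ k := by
        funext z; exact prod_sub_root_mul k hk h y z
      rw [this]
      exact (hasDerivAt_pow k x).sub_const _
    have := h1.unique h2
    simpa using this
  have hP : ∏ m ∈ range k, (x - y * φ ^ m) = x ^ k - y ^ k := prod_sub_root_mul k hk h y x
  have hPne : x ^ k - y ^ k ≠ 0 := sub_ne_zero.2 hxy
  calc ∑ m ∈ range k, 1 / (x - y * φ ^ m)
      = ∑ m ∈ range k, (∏ m' ∈ (range k).erase m, (x - y * φ ^ m')) / (x ^ k - y ^ k) := by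
        apply Finset.sum_congr rfl
        intro m hm
        rw [eq_div_iff hPne, ← hP, ← Finset.mul_prod_erase (range k) _ hm]
        field_simp [hne m hm]
    _ = k * x ^ (k - 1) / (x ^ k - y ^ k) := by rw [← Finset.sum_div, hder]

lemma pow_val_mod {φ : ℂ} {k : ℕ} (hk : 0 < k) (hφ : φ ^ k = 1) (a : ℕ) :
    φ ^ (a % k) = φ ^ a := by
  conv_rhs => rw [← Nat.div_add_mod a k]
  rw [pow_add, pow_mul, hφ, one_pow, one_mul]

lemma sum_inv_one_sub_roots (k : ℕ) (hk : 0 < k) {φ : ℂ} (h : IsPrimitiveRoot φ k) :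
    ∑ j ∈ (Finset.univ : Finset (Fin k)).erase ⟨0, hk⟩, 1 / (1 - φ ^ (j : ℕ)) = (k - 1) / 2 := by
  haveI : NeZero k := ⟨hk.ne'⟩
  have hz : (⟨0, hk⟩ : Fin k) = 0 := rfl
  rw [hz]
  set S := ∑ j ∈ (Finset.univ : Finset (Fin k)).erase 0, 1 / (1 - φ ^ (j : ℕ)) with hS
  have key : S + S = (k : ℂ) - 1 := by
    have hrev : S = ∑ j ∈ (Finset.univ : Finset (Fin k)).erase 0, 1 / (1 - φ ^ (((-j) : Fin k) : ℕ)) := by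
      rw [hS]
      apply Finset.sum_nbij' (fun j => -j) (fun j => -j)
      · intro a ha; simp only [Finset.mem_erase, Finset.mem_univ, and_true] at ha ⊢; simpa using ha
      · intro a ha; simp only [Finset.mem_erase, Finset.mem_univ, and_true] at ha ⊢; simpa using ha
      · intro a _; simp
      · intro a _; simp
      · intro a _; simp
    nth_rewrite 2 [hrev]
    rw [← Finset.sum_add_distrib]
    have key2 : ∀ j ∈ (Finset.univ : Finset (Fin k)).erase 0,
        1 / (1 - φ ^ (j : ℕ)) + 1 / (1 - φ ^ (((-j) : Fin k) : ℕ)) = 1 := by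
      intro j hj
      have hj0 : j ≠ 0 := (Finset.mem_erase.1 hj).1
      have hjpos : 0 < (j : ℕ) :=
        Nat.pos_of_ne_zero (fun h' => hj0 (Fin.ext (by simp [h'])))
      have hneg : (((-j) : Fin k) : ℕ) = k - (j : ℕ) := by
        rw [Fin.coe_neg]
        exact Nat.mod_eq_of_lt (by omega)
      set ζ := φ ^ (j : ℕ) with hζ
      have hζ1 : ζ ≠ 1 := h.pow_ne_one_of_pos_of_lt hjpos.ne' j.isLt
      have hζ0 : ζ ≠ 0 := pow_ne_zero _ (h.ne_zero hk.ne')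
      have hinv : φ ^ (((-j) : Fin k) : ℕ) = ζ⁻¹ := by
        rw [hneg]
        have h1 : φ ^ (k - (j : ℕ)) * ζ = 1 := by
          rw [hζ, ← pow_add, Nat.sub_add_cancel j.isLt.le, h.pow_eq_one]
        field_simp at h1 ⊢
        linear_combination h1
      rw [hinv]
      have h1 : 1 - ζ ≠ 0 := sub_ne_zero.2 (Ne.symm hζ1)
      have h2 : 1 - ζ⁻¹ ≠ 0 := by
        intro hcon
        apply hζ1
        have h3 : ζ⁻¹ = 1 := by linear_combination -hcon
        rw [← inv_inv ζ, h3, inv_one]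
      rw [div_add_div _ _ h1 h2, div_eq_one_iff_eq (mul_ne_zero h1 h2)]
      field_simp
      ring
    rw [Finset.sum_congr rfl key2, Finset.sum_const,
      Finset.card_erase_of_mem (Finset.mem_univ _), Finset.card_univ, Fintype.card_fin,
      nsmul_eq_mul, mul_one, Nat.cast_sub hk, Nat.cast_one]
  rw [eq_div_iff (two_ne_zero)]
  linear_combination key

lemma sum_inv_pow_sub_pow (k : ℕ) (hk : 0 < k) {φ : ℂ} (h : IsPrimitiveRoot φ k) (m : Fin k) :
    ∑ m' ∈ (Finset.univ : Finset (Fin k)).erase m, 1 / (φ ^ (m : ℕ) - φ ^ ((m' : ℕ))) =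
      (φ ^ (m : ℕ))⁻¹ * ((k - 1) / 2) := by
  haveI : NeZero k := ⟨hk.ne'⟩
  have hφ0 : φ ≠ 0 := h.ne_zero hk.ne'
  have hu0 : φ ^ (m : ℕ) ≠ 0 := pow_ne_zero _ hφ0
  have hre : ∑ m' ∈ (Finset.univ : Finset (Fin k)).erase m, 1 / (φ ^ (m : ℕ) - φ ^ ((m' : ℕ)))
      = ∑ j ∈ (Finset.univ : Finset (Fin k)).erase 0, 1 / (φ ^ (m : ℕ) - φ ^ (((m + j) : Fin k) : ℕ)) := by
    symm
    apply Finset.sum_nbij' (fun j => m + j) (fun j => j - m)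
    · intro a ha
      simp only [Finset.mem_erase, Finset.mem_univ, and_true] at ha ⊢
      intro hcon
      exact ha (by simpa using congrArg (fun z => z - m) hcon)
    · intro a ha
      simp only [Finset.mem_erase, Finset.mem_univ, and_true] at ha ⊢
      intro hcon
      exact ha (by simpa [sub_eq_zero] using hcon)
    · intro a _; abel
    · intro a _; abel
    · intro a _; rfl
  rw [hre]
  have hterm : ∀ j ∈ (Finset.univ : Finset (Fin k)).erase 0,
      1 / (φ ^ (m : ℕ) - φ ^ (((m + j) : Fin k) : ℕ)) = (φ ^ (m : ℕ))⁻¹ * (1 / (1 - φ ^ (j : ℕ))) := by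
    intro j hj
    have hval : φ ^ (((m + j) : Fin k) : ℕ) = φ ^ (m : ℕ) * φ ^ (j : ℕ) := by
      rw [Fin.val_add, pow_val_mod hk h.pow_eq_one, pow_add]
    have hj0 : j ≠ 0 := (Finset.mem_erase.1 hj).1
    have hjpos : 0 < (j : ℕ) :=
      Nat.pos_of_ne_zero (fun h' => hj0 (Fin.ext (by simp [h'])))
    have hone : (1 : ℂ) - φ ^ (j : ℕ) ≠ 0 := by
      intro hcon
      exact h.pow_ne_one_of_pos_of_lt hjpos.ne' j.isLt (by linear_combination -hcon)
    rw [hval]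
    have hden : φ ^ (m : ℕ) - φ ^ (m : ℕ) * φ ^ (j : ℕ) = φ ^ (m : ℕ) * (1 - φ ^ (j : ℕ)) := by ring
    rw [hden, one_div, mul_inv, ← one_div]
    rw [one_div (1 - φ ^ (j:ℕ))]
  rw [Finset.sum_congr rfl hterm, ← Finset.mul_sum]
  have hz : (0 : Fin k) = ⟨0, hk⟩ := rfl
  rw [hz, sum_inv_one_sub_roots k hk h]



noncomputable def Efun (n k : ℕ) (c : ℝ) (p : Fin n → ℝ) : ℝ :=
  ∑ l, ((1/2) * p l ^ 2 - c * Real.log (p l))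
    - (1/2) * ∑ a, ∑ b ∈ Finset.univ.erase a, Real.log (p a ^ k - p b ^ k)

lemma sum_le_single_add {ι : Type*} [DecidableEq ι] (s : Finset ι) (f : ι → ℝ) (u : ℝ)
    (hu : ∀ i ∈ s, f i ≤ u) (h0 : 0 ≤ u) {i : ι} (hi : i ∈ s) :
    ∑ j ∈ s, f j ≤ f i + s.card * u := by
  rw [← Finset.add_sum_erase s f hi]
  have h1 : ∑ j ∈ s.erase i, f j ≤ (s.erase i).card • u :=
    Finset.sum_le_card_nsmul _ _ _ (fun j hj => hu j (Finset.mem_of_mem_erase hj))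
  have h2 : ((s.erase i).card : ℝ) * u ≤ s.card * u := by
    apply mul_le_mul_of_nonneg_right _ h0
    exact_mod_cast Nat.cast_le.2 (Finset.card_le_card (Finset.erase_subset _ _))
  simp only [nsmul_eq_mul] at h1
  linarith


lemma Efun_confine (n k : ℕ) (c : ℝ) (hn : 1 ≤ n) (hk : 1 ≤ k) (hc : 0 < c)
    (M B₀ : ℝ) (hB₀1 : 1 ≤ B₀)
    (hB₀A : 2*(c + n*c + (n:ℝ)^2*k/2) + 2*(max M 0) ≤ B₀)
    (p : Fin n → ℝ) (hp : ∀ l, 0 < p l) (hm : StrictMono p) (hE : Efun n k c p ≤ M) :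
    (∀ l, p l ≤ B₀) ∧
    (∀ l, Real.exp (-((max M 0 + n*c*B₀ + (n:ℝ)^2*k*B₀)/c)) ≤ p l) ∧
    (∀ a b : Fin n, a < b →
      Real.exp (-(2*(max M 0) + 4*n*c*B₀ + 2*((n:ℝ)+(n:ℝ)^2)*k*B₀)) ≤ p b ^ k - p a ^ k) := by
  have hk0 : k ≠ 0 := by omega
  have hN1 : (1:ℝ) ≤ (n:ℝ) := by exact_mod_cast hn
  have hK1 : (1:ℝ) ≤ (k:ℝ) := by exact_mod_cast hk
  set M' := max M 0 with hM'
  have hM'0 : 0 ≤ M' := le_max_right _ _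
  have hMM' : M ≤ M' := le_max_left _ _
  set lmax : Fin n := ⟨n-1, by omega⟩ with hlmax
  set B := p lmax with hB
  have hpB : ∀ l, p l ≤ B := by
    intro l
    exact hm.monotone (by rw [Fin.le_def]; simp [hlmax]; omega)
  have hB0 : 0 < B := hp lmax
  have hcard : ∀ a : Fin n, ((Finset.univ.erase a).card : ℝ) ≤ (n:ℝ) := by
    intro a
    rw [Finset.card_erase_of_mem (Finset.mem_univ a), Finset.card_univ, Fintype.card_fin]
    exact Nat.cast_le.2 (Nat.sub_le n 1)
  -- per-term bounds
  have hT1 : ∀ l, -(c*B) ≤ (1/2) * p l ^ 2 - c * Real.log (p l) := by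
    intro l
    have h1 : Real.log (p l) ≤ p l := Real.log_le_self (hp l).le
    have h2 : c * Real.log (p l) ≤ c * B :=
      le_trans (mul_le_mul_of_nonneg_left h1 hc.le) (mul_le_mul_of_nonneg_left (hpB l) hc.le)
    nlinarith [sq_nonneg (p l)]
  have hLne : ∀ a b : Fin n, a ≠ b → p a ^ k - p b ^ k ≠ 0 := by
    intro a b hab
    rcases lt_or_gt_of_ne hab with h | h
    · have := pow_lt_pow_left₀ (hm h) (hp a).le hk0
      linarith
    · have := pow_lt_pow_left₀ (hm h) (hp b).le hk0
      linarith
  have hL : ∀ a b : Fin n, a ≠ b → Real.log (p a ^ k - p b ^ k) ≤ k * B := by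
    intro a b hab
    have habs : |p a ^ k - p b ^ k| ≤ B ^ k := by
      have h1 : p a ^ k ≤ B ^ k := pow_le_pow_left₀ (hp a).le (hpB a) k
      have h2 : p b ^ k ≤ B ^ k := pow_le_pow_left₀ (hp b).le (hpB b) k
      have h3 : 0 ≤ p a ^ k := (pow_pos (hp a) k).le
      have h4 : 0 ≤ p b ^ k := (pow_pos (hp b) k).le
      rw [abs_le]; constructor <;> linarith
    calc Real.log (p a ^ k - p b ^ k) = Real.log |p a ^ k - p b ^ k| := (Real.log_abs _).symm
      _ ≤ Real.log (B ^ k) :=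
          (Real.log_le_log_iff (abs_pos.2 (hLne a b hab)) (pow_pos hB0 k)).2 habs
      _ = k * Real.log B := by rw [Real.log_pow]
      _ ≤ k * B := mul_le_mul_of_nonneg_left (Real.log_le_self hB0.le) (by positivity)
  have hkB0 : (0:ℝ) ≤ k * B := by positivity
  have hinner : ∀ a : Fin n, ∑ b ∈ Finset.univ.erase a, Real.log (p a ^ k - p b ^ k)
      ≤ (n:ℝ) * (k*B) := by
    intro a
    have h1 := Finset.sum_le_card_nsmul (Finset.univ.erase a)
      (fun b => Real.log (p a ^ k - p b ^ k)) (k*B)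
      (fun b hb => hL a b (Ne.symm (Finset.ne_of_mem_erase hb)))
    simp only [nsmul_eq_mul] at h1
    exact le_trans h1 (mul_le_mul_of_nonneg_right (hcard a) hkB0)
  have hdouble : ∑ a, ∑ b ∈ Finset.univ.erase a, Real.log (p a ^ k - p b ^ k)
      ≤ (n:ℝ)^2 * (k*B) := by
    have h1 := Finset.sum_le_card_nsmul (Finset.univ : Finset (Fin n))
      (fun a => ∑ b ∈ Finset.univ.erase a, Real.log (p a ^ k - p b ^ k)) ((n:ℝ)*(k*B))
      (fun a _ => hinner a)
    simp only [nsmul_eq_mul, Finset.card_univ, Fintype.card_fin] at h1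
    calc _ ≤ (n:ℝ) * ((n:ℝ)*(k*B)) := h1
      _ = (n:ℝ)^2 * (k*B) := by ring
  have hsum1low : ∀ l₀ : Fin n, (1/2) * p l₀ ^ 2 - c * Real.log (p l₀) - (n:ℝ)*(c*B)
      ≤ ∑ l, ((1/2) * p l ^ 2 - c * Real.log (p l)) := by
    intro l₀
    rw [← Finset.add_sum_erase Finset.univ _ (Finset.mem_univ l₀)]
    have h1 := Finset.card_nsmul_le_sum (Finset.univ.erase l₀)
      (fun l => (1/2) * p l ^ 2 - c * Real.log (p l)) (-(c*B)) (fun l _ => hT1 l)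
    simp only [nsmul_eq_mul] at h1
    have hcb : (0:ℝ) ≤ c*B := by positivity
    have h2 : -((n:ℝ)*(c*B)) ≤ ((Finset.univ.erase l₀).card : ℝ) * (-(c*B)) := by
      have := hcard l₀
      nlinarith
    linarith
  have hEr := hE
  rw [Efun] at hEr
  -- Step (i): B ≤ B₀
  have hBB₀ : B ≤ B₀ := by
    have h1 := hsum1low lmax
    have h3 : c * Real.log B ≤ c * B :=
      mul_le_mul_of_nonneg_left (Real.log_le_self hB0.le) hc.le
    have hElow : (1/2) * B ^ 2 - c*B - (n:ℝ)*(c*B) - (1/2)*((n:ℝ)^2*(k*B)) ≤ M := by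
      linarith [hdouble, h1, h3, hEr]
    rcases le_or_gt B 1 with h | h
    · linarith
    · nlinarith [mul_nonneg hM'0 (by linarith : (0:ℝ) ≤ B - 1)]
  have hcB₀ : c*B ≤ c*B₀ := mul_le_mul_of_nonneg_left hBB₀ hc.le
  have hkB₀ : k*B ≤ k*B₀ := mul_le_mul_of_nonneg_left hBB₀ (by positivity)
  have f2 : c*B₀ ≤ (n:ℝ)*(c*B₀) := le_mul_of_one_le_left (by positivity) hN1
  have f3 : (n:ℝ)*(c*B) ≤ (n:ℝ)*(c*B₀) := mul_le_mul_of_nonneg_left hcB₀ (by positivity)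
  have f4 : (n:ℝ)*((n:ℝ)*(k*B)) ≤ (n:ℝ)*((n:ℝ)*(k*B₀)) :=
    mul_le_mul_of_nonneg_left (mul_le_mul_of_nonneg_left hkB₀ (by positivity)) (by positivity)
  have f5 : (n:ℝ)*(k*B) ≤ (n:ℝ)*(k*B₀) := mul_le_mul_of_nonneg_left hkB₀ (by positivity)
  have f6 : (0:ℝ) ≤ (n:ℝ)*(k*B₀) := by positivity
  have f7 : (0:ℝ) ≤ (n:ℝ)*(c*B₀) := by positivity
  have f8 : (0:ℝ) ≤ (n:ℝ)*((n:ℝ)*(k*B₀)) := by positivity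
  refine ⟨fun l => le_trans (hpB l) hBB₀, ?_, ?_⟩
  -- Step (ii)
  · intro l₀
    have hT1up : (1/2) * p l₀ ^ 2 - c * Real.log (p l₀) ≤ M' + n*c*B₀ + (n:ℝ)^2*k*B₀ := by
      have h1 := hsum1low l₀
      linarith [hdouble, hEr, hMM', f3, f4, f8]
    have h1 : -(M' + n*c*B₀ + (n:ℝ)^2*k*B₀) ≤ c * Real.log (p l₀) := by
      linarith [hT1up, sq_nonneg (p l₀)]
    have hlog : -((M' + n*c*B₀ + (n:ℝ)^2*k*B₀)/c) ≤ Real.log (p l₀) := by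
      rw [← neg_div]
      exact (div_le_iff₀' hc).2 h1
    calc Real.exp (-((M' + n*c*B₀ + (n:ℝ)^2*k*B₀)/c)) ≤ Real.exp (Real.log (p l₀)) :=
          Real.exp_le_exp.2 hlog
      _ = p l₀ := Real.exp_log (hp l₀)
  -- Step (iii)
  · intro a b hab
    have hmem : a ∈ Finset.univ.erase b := Finset.mem_erase.2 ⟨Fin.ne_of_lt hab, Finset.mem_univ a⟩
    have houter : ∑ a', ∑ b' ∈ Finset.univ.erase a', Real.log (p a' ^ k - p b' ^ k)
        ≤ (∑ b' ∈ Finset.univ.erase b, Real.log (p b ^ k - p b' ^ k)) + (n:ℝ) * ((n:ℝ)*(k*B)) := by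
      have h1 := sum_le_single_add (Finset.univ : Finset (Fin n))
        (fun a' => ∑ b' ∈ Finset.univ.erase a', Real.log (p a' ^ k - p b' ^ k))
        ((n:ℝ)*(k*B)) (fun a' _ => hinner a') (by positivity) (Finset.mem_univ b)
      simp only [Finset.card_univ, Fintype.card_fin] at h1
      exact h1
    have hinner2 : ∑ b' ∈ Finset.univ.erase b, Real.log (p b ^ k - p b' ^ k)
        ≤ Real.log (p b ^ k - p a ^ k) + (n:ℝ)*(k*B) := by
      have h1 := sum_le_single_add (Finset.univ.erase b)
        (fun b' => Real.log (p b ^ k - p b' ^ k)) (k*B)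
        (fun b' hb' => hL b b' (Ne.symm (Finset.ne_of_mem_erase hb'))) hkB0 hmem
      have h2 : ((Finset.univ.erase b).card:ℝ)*(k*B) ≤ (n:ℝ)*(k*B) :=
        mul_le_mul_of_nonneg_right (hcard b) hkB0
      linarith [h1, h2]
    have hS1low : -(c*B) - (n:ℝ)*(c*B) ≤ ∑ l, ((1/2) * p l ^ 2 - c * Real.log (p l)) := by
      have h1 := hsum1low lmax
      have h3 : c * Real.log B ≤ c * B :=
        mul_le_mul_of_nonneg_left (Real.log_le_self hB0.le) hc.le
      linarith [h1, h3, sq_nonneg B]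
    have hLlow : -(2*M' + 4*n*c*B₀ + 2*((n:ℝ)+(n:ℝ)^2)*k*B₀) ≤ Real.log (p b ^ k - p a ^ k) := by
      linarith [houter, hinner2, hS1low, hEr, hMM', hcB₀, f2, f3, f4, f5, f6, f7, f8]
    have hpos : 0 < p b ^ k - p a ^ k := by
      have := pow_lt_pow_left₀ (hm hab) (hp a).le hk0
      linarith
    calc Real.exp (-(2*M' + 4*n*c*B₀ + 2*((n:ℝ)+(n:ℝ)^2)*k*B₀))
        ≤ Real.exp (Real.log (p b ^ k - p a ^ k)) := Real.exp_le_exp.2 hLlow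
      _ = p b ^ k - p a ^ k := Real.exp_log hpos

theorem exists_critical (n k : ℕ) (hn : 1 ≤ n) (hk : 1 ≤ k) (c : ℝ) (hc : 0 < c) :
    ∃ x : Fin n → ℝ, (∀ l, 0 < x l) ∧ StrictMono x ∧
      ∀ l, x l - c / x l
        - ∑ l' ∈ Finset.univ.erase l, (k : ℝ) * x l ^ (k-1) / (x l ^ k - x l' ^ k) = 0 := by
  classical
  have hk0 : k ≠ 0 := by omega
  set p0 : Fin n → ℝ := fun l => (l : ℕ) + 1 with hp0def
  have hp0pos : ∀ l, 0 < p0 l := fun l => by positivity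
  have hp0mono : StrictMono p0 := by
    intro a b hab
    simp only [hp0def]
    have : (a : ℕ) < (b : ℕ) := hab
    exact by exact_mod_cast Nat.add_lt_add_right this 1
  set M : ℝ := Efun n k c p0 with hMdef
  set M' : ℝ := max M 0 with hM'def
  set B₀ : ℝ := max 1 (2*(c + n*c + (n:ℝ)^2*k/2) + 2*M') with hB₀def
  have hB₀1 : 1 ≤ B₀ := le_max_left _ _
  have hB₀A : 2*(c + n*c + (n:ℝ)^2*k/2) + 2*M' ≤ B₀ := le_max_right _ _
  set δ : ℝ := Real.exp (-((M' + n*c*B₀ + (n:ℝ)^2*k*B₀)/c)) with hδdef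
  set η : ℝ := Real.exp (-(2*M' + 4*n*c*B₀ + 2*((n:ℝ)+(n:ℝ)^2)*k*B₀)) with hηdef
  have hδpos : 0 < δ := Real.exp_pos _
  have hηpos : 0 < η := Real.exp_pos _
  set S : Set (Fin n → ℝ) :=
    {p | (∀ l, δ ≤ p l ∧ p l ≤ B₀) ∧ ∀ a b : Fin n, a < b → p a ^ k + η ≤ p b ^ k} with hSdef
  have hconf : ∀ p : Fin n → ℝ, (∀ l, 0 < p l) → StrictMono p → Efun n k c p ≤ M → p ∈ S := by
    intro p h1 h2 h3
    obtain ⟨c1, c2, c3⟩ := Efun_confine n k c hn hk hc M B₀ hB₀1 hB₀A p h1 h2 h3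
    exact ⟨fun l => ⟨c2 l, c1 l⟩, fun a b hab => by have := c3 a b hab; linarith⟩
  have hSpos : ∀ p ∈ S, ∀ l, 0 < p l := fun p hp l => lt_of_lt_of_le hδpos (hp.1 l).1
  have hSmono : ∀ p ∈ S, StrictMono p := by
    intro p hp a b hab
    have h1 := hp.2 a b hab
    by_contra hcon
    push_neg at hcon
    have := pow_le_pow_left₀ (hSpos p hp b).le hcon k
    linarith
  have hp0S : p0 ∈ S := hconf p0 hp0pos hp0mono le_rfl
  -- compactness of S
  have hS_eq : S = (Set.univ.pi fun _ : Fin n => Set.Icc δ B₀) ∩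
      (⋂ (a : Fin n) (b : Fin n), {p : Fin n → ℝ | a < b → p a ^ k + η ≤ p b ^ k}) := by
    ext p
    constructor
    · rintro ⟨h1, h2⟩
      refine ⟨fun l _ => Set.mem_Icc.2 ⟨(h1 l).1, (h1 l).2⟩, ?_⟩
      simp only [Set.mem_iInter]
      exact fun a b hab => h2 a b hab
    · rintro ⟨h1, h2⟩
      simp only [Set.mem_iInter] at h2
      exact ⟨fun l => Set.mem_Icc.1 (h1 l (Set.mem_univ l)), fun a b hab => h2 a b hab⟩
  have hScomp : IsCompact S := by
    rw [hS_eq]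
    refine (isCompact_univ_pi fun _ => isCompact_Icc).inter_right ?_
    refine isClosed_iInter fun a => isClosed_iInter fun b => ?_
    by_cases hab : a < b
    · simp only [hab, forall_true_left]
      exact isClosed_le (((continuous_apply a).pow k).add continuous_const)
        ((continuous_apply b).pow k)
    · simp only [hab]
      simp
  -- continuity of Efun on S
  have hEcont : ContinuousOn (Efun n k c) S := by
    apply ContinuousOn.sub
    · apply continuousOn_finset_sum
      intro l _
      apply ContinuousOn.sub
      · exact (continuousOn_const.mul (((continuous_apply l).pow 2).continuousOn))
      · refine continuousOn_const.mul (ContinuousOn.log (continuous_apply l).continuousOn ?_)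
        exact fun p hp => (hSpos p hp l).ne'
    · apply ContinuousOn.mul continuousOn_const
      apply continuousOn_finset_sum
      intro a _
      apply continuousOn_finset_sum
      intro b hb
      have hab : b ≠ a := Finset.ne_of_mem_erase hb
      refine ContinuousOn.log (((continuous_apply a).pow k).sub ((continuous_apply b).pow k)).continuousOn ?_
      intro p hp
      rcases lt_or_gt_of_ne hab with h | h
      · have := hp.2 b a h
        have hη := hηpos
        intro hcon
        simp only [sub_eq_zero] at hcon
        linarith
      · have := hp.2 a b h
        intro hcon
        simp only [sub_eq_zero] at hcon
        linarith
  obtain ⟨x, hxS, hxmin⟩ := hScomp.exists_isMinOn ⟨p0, hp0S⟩ hEcont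
  have hxpos : ∀ l, 0 < x l := hSpos x hxS
  have hxmono : StrictMono x := hSmono x hxS
  have hglobal : ∀ q : Fin n → ℝ, (∀ l, 0 < q l) → StrictMono q →
      Efun n k c x ≤ Efun n k c q := by
    intro q hq1 hq2
    rcases le_or_gt (Efun n k c q) M with h | h
    · exact hxmin (hconf q hq1 hq2 h)
    · exact le_trans (hxmin hp0S) h.le
  -- x is a local minimum
  set U : Set (Fin n → ℝ) :=
    {p | (∀ l, 0 < p l) ∧ ∀ a b : Fin n, a < b → p a < p b} with hUdef
  have hUopen : IsOpen U := by
    have : U = (⋂ l, {p : Fin n → ℝ | 0 < p l}) ∩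
        ⋂ (a : Fin n) (b : Fin n), {p : Fin n → ℝ | a < b → p a < p b} := by
      ext p; simp [hUdef, Set.mem_iInter]
    rw [this]
    refine IsOpen.inter (isOpen_iInter_of_finite fun l =>
      isOpen_lt continuous_const (continuous_apply l)) ?_
    refine isOpen_iInter_of_finite fun a => isOpen_iInter_of_finite fun b => ?_
    by_cases hab : a < b
    · simp only [hab, forall_true_left]
      exact isOpen_lt (continuous_apply a) (continuous_apply b)
    · simp only [hab]
      simp
  have hxU : x ∈ U := ⟨hxpos, fun a b hab => hxmono hab⟩
  have hlocal : IsLocalMin (Efun n k c) x := by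
    filter_upwards [hUopen.mem_nhds hxU] with q hq
    exact hglobal q hq.1 (fun a b hab => hq.2 a b hab)
  refine ⟨x, hxpos, hxmono, ?_⟩
  intro l
  set t0 : ℝ := x l with ht0
  have ht0pos : 0 < t0 := hxpos l
  have ht0ne : t0 ≠ 0 := ht0pos.ne'
  have hpowne : ∀ a b : Fin n, a ≠ b → x a ^ k ≠ x b ^ k := by
    intro a b hab
    rcases lt_or_gt_of_ne hab with h | h
    · exact ne_of_lt (pow_lt_pow_left₀ (hxmono h) (hxpos a).le hk0)
    · exact ne_of_gt (pow_lt_pow_left₀ (hxmono h) (hxpos b).le hk0)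
  -- local minimum along coordinate l
  have hloc1 : IsLocalMin (fun t => Efun n k c (Function.update x l t)) t0 := by
    have h0 : Function.update x l t0 = x := Function.update_eq_self l x
    have htend : Filter.Tendsto (fun t => Function.update x l t) (nhds t0) (nhds x) := by
      have hcont : Continuous (fun t : ℝ => Function.update x l t) :=
        continuous_const.update l continuous_id
      simpa [h0] using hcont.tendsto t0
    have hev := htend.eventually hlocal
    refine hev.mono fun t ht => ?_
    simpa [h0] using ht
  -- derivative computation
  set d1 : Fin n → ℝ := fun l' => if l' = l then t0 - c / t0 else 0 with hd1
  set d2 : Fin n → Fin n → ℝ := fun a b =>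
    if a = l then (k : ℝ) * t0 ^ (k-1) / (t0 ^ k - x b ^ k)
    else if b = l then -((k : ℝ) * t0 ^ (k-1)) / (x a ^ k - t0 ^ k) else 0 with hd2
  have h1 : ∀ l' ∈ (Finset.univ : Finset (Fin n)), HasDerivAt
      (fun t => (1/2) * (Function.update x l t l') ^ 2 - c * Real.log (Function.update x l t l'))
      (d1 l') t0 := by
    intro l' _
    by_cases hl' : l' = l
    · subst hl'
      simp only [Function.update_self, hd1, if_pos rfl]
      have ha : HasDerivAt (fun t : ℝ => t ^ 2) (2 * t0) t0 := by
        simpa using hasDerivAt_pow 2 t0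
      have hb : HasDerivAt (fun t : ℝ => Real.log t) t0⁻¹ t0 := Real.hasDerivAt_log ht0ne
      have hder := (ha.const_mul (1/2 : ℝ)).sub (hb.const_mul c)
      have heq : t0 - c / t0 = 1/2 * (2 * t0) - c * t0⁻¹ := by
        rw [div_eq_mul_inv]; ring
      rw [heq]
      exact hder
    · simp only [Function.update_of_ne hl', hd1, if_neg hl']
      exact hasDerivAt_const t0 _
  have h2 : ∀ a : Fin n, ∀ b ∈ Finset.univ.erase a, HasDerivAt
      (fun t => Real.log ((Function.update x l t a) ^ k - (Function.update x l t b) ^ k))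
      (d2 a b) t0 := by
    intro a b hb
    have hba : b ≠ a := Finset.ne_of_mem_erase hb
    by_cases ha : a = l
    · have hbl : b ≠ l := by rw [← ha]; exact hba
      have hv : d2 a b = (k:ℝ) * t0 ^ (k-1) / (t0 ^ k - x b ^ k) := by simp [hd2, ha]
      rw [hv]
      have hfun : (fun t => Real.log ((Function.update x l t a) ^ k - (Function.update x l t b) ^ k))
          = fun t => Real.log (t ^ k - x b ^ k) := by
        funext t
        rw [ha, Function.update_self, Function.update_of_ne hbl]
      rw [hfun]
      have hf : HasDerivAt (fun t : ℝ => t ^ k - x b ^ k) ((k:ℝ) * t0 ^ (k-1)) t0 :=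
        (hasDerivAt_pow k t0).sub_const _
      have hne : t0 ^ k - x b ^ k ≠ 0 := sub_ne_zero.2 (hpowne l b (Ne.symm hbl))
      exact hf.log hne
    · by_cases hbl : b = l
      · have hv : d2 a b = -((k:ℝ) * t0 ^ (k-1)) / (x a ^ k - t0 ^ k) := by
          simp [hd2, ha, hbl]
        rw [hv]
        have hfun : (fun t => Real.log ((Function.update x l t a) ^ k - (Function.update x l t b) ^ k))
            = fun t => Real.log (x a ^ k - t ^ k) := by
          funext t
          rw [hbl, Function.update_self, Function.update_of_ne ha]
        rw [hfun]
        have hf : HasDerivAt (fun t : ℝ => x a ^ k - t ^ k) (-((k:ℝ) * t0 ^ (k-1))) t0 :=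
          (hasDerivAt_pow k t0).const_sub (x a ^ k)
        have hne : x a ^ k - t0 ^ k ≠ 0 := sub_ne_zero.2 (hpowne a l ha)
        exact hf.log hne
      · have hv : d2 a b = 0 := by simp [hd2, ha, hbl]
        rw [hv]
        have hfun : (fun t => Real.log ((Function.update x l t a) ^ k - (Function.update x l t b) ^ k))
            = fun _ => Real.log (x a ^ k - x b ^ k) := by
          funext t
          rw [Function.update_of_ne ha, Function.update_of_ne hbl]
        rw [hfun]
        exact hasDerivAt_const t0 _
  have hEderiv : HasDerivAt (fun t => Efun n k c (Function.update x l t))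
      ((∑ l', d1 l') - (1/2) * (∑ a, ∑ b ∈ Finset.univ.erase a, d2 a b)) t0 := by
    have heq : (fun t => Efun n k c (Function.update x l t)) =
        fun t => (∑ l', ((1/2) * (Function.update x l t l') ^ 2
            - c * Real.log (Function.update x l t l')))
          - (1/2) * ∑ a, ∑ b ∈ Finset.univ.erase a,
              Real.log ((Function.update x l t a) ^ k - (Function.update x l t b) ^ k) := by
      funext t; rfl
    rw [heq]
    exact (HasDerivAt.fun_sum h1).sub
      ((HasDerivAt.fun_sum (fun a _ => HasDerivAt.fun_sum (fun b hb => h2 a b hb))).const_mul (1/2 : ℝ))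
  have hsum1 : ∑ l', d1 l' = t0 - c / t0 := by
    rw [hd1]
    simp
  set S1 : ℝ := ∑ l' ∈ Finset.univ.erase l, (k : ℝ) * t0 ^ (k-1) / (t0 ^ k - x l' ^ k) with hS1
  have hsum2 : ∑ a, ∑ b ∈ Finset.univ.erase a, d2 a b = 2 * S1 := by
    rw [← Finset.add_sum_erase _ _ (Finset.mem_univ l)]
    have hA : ∑ b ∈ Finset.univ.erase l, d2 l b = S1 := by
      apply Finset.sum_congr rfl
      intro b _
      simp [hd2]
    have hBB : ∀ a ∈ Finset.univ.erase l, ∑ b ∈ Finset.univ.erase a, d2 a b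
        = (k : ℝ) * t0 ^ (k-1) / (t0 ^ k - x a ^ k) := by
      intro a ha
      have hal : a ≠ l := Finset.ne_of_mem_erase ha
      have hlmem : l ∈ Finset.univ.erase a := Finset.mem_erase.2 ⟨Ne.symm hal, Finset.mem_univ l⟩
      rw [Finset.sum_eq_single_of_mem l hlmem]
      · have hv : d2 a l = -((k:ℝ) * t0 ^ (k-1)) / (x a ^ k - t0 ^ k) := by
          simp [hd2, hal]
        rw [hv, div_eq_div_iff (sub_ne_zero.2 (hpowne a l hal))
          (sub_ne_zero.2 (hpowne l a (Ne.symm hal)))]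
        ring
      · intro b _ hbl
        simp [hd2, hal, hbl]
    rw [hA, Finset.sum_congr rfl hBB, hS1]
    ring
  have hzero := hloc1.hasDerivAt_eq_zero hEderiv
  rw [hsum1, hsum2] at hzero
  linarith


/-- (Hermite-type balanced configurations) For `n ≥ 1`, `k ≥ 2`, and `ε₀ ∈ {-1, 0, 1}`
(with `k ≥ 4` when `ε₀ = 1`), there exist `0 < p 1 < ⋯ < p n` such that the
configuration of points `p l · φ^m` (`φ = e^{2πi/k}`), all with charge `-1`, together
with the origin with charge `ε₀` when `ε₀ ≠ 0`, is balanced: the force vanishes at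
every orbit point, and at the origin whenever the origin belongs to the configuration
(when `ε₀ = 0` the origin carries charge `0` and does not affect the other forces). -/
theorem hermite_type_balanced (n k : ℕ) (hn : 1 ≤ n) (hk : 2 ≤ k)
    (ε₀ : ℂ) (hε₀ : ε₀ = -1 ∨ ε₀ = 0 ∨ ε₀ = 1) (hk4 : ε₀ = 1 → 4 ≤ k) :
    ∃ p : Fin n → ℝ, (∀ l, 0 < p l) ∧ StrictMono p ∧
      ((∀ j : Fin n × Fin k,
          force
            (fun i : (Fin n × Fin k) ⊕ Unit =>
              match i with
              | Sum.inl (l, m) =>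
                  (p l : ℂ) * Complex.exp (2 * Real.pi * Complex.I / k) ^ (m : ℕ)
              | Sum.inr _ => 0)
            (fun i =>
              match i with
              | Sum.inl _ => -1
              | Sum.inr _ => ε₀)
            (Sum.inl j) = 0) ∧
        (ε₀ ≠ 0 →
          force
            (fun i : (Fin n × Fin k) ⊕ Unit =>
              match i with
              | Sum.inl (l, m) =>
                  (p l : ℂ) * Complex.exp (2 * Real.pi * Complex.I / k) ^ (m : ℕ)
              | Sum.inr _ => 0)
            (fun i =>
              match i with
              | Sum.inl _ => -1
              | Sum.inr _ => ε₀)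
            (Sum.inr ()) = 0)) := by
  classical
  have hk0 : k ≠ 0 := by omega
  have hk1 : 1 ≤ k := by omega
  set φ : ℂ := Complex.exp (2 * Real.pi * Complex.I / k) with hφdef
  have hφ : IsPrimitiveRoot φ k := Complex.isPrimitiveRoot_exp k hk0
  have hφk : φ ^ k = 1 := hφ.pow_eq_one
  have hφ0 : φ ≠ 0 := hφ.ne_zero hk0
  have hφ1 : φ ≠ 1 := hφ.ne_one (by omega)
  -- the real charge and positivity of c
  have hre : ((ε₀.re : ℝ) : ℂ) = ε₀ := by
    rcases hε₀ with h | h | h <;> rw [h] <;> simp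
  set c : ℝ := ((k:ℝ) - 1)/2 - ε₀.re with hcdef
  have hc : 0 < c := by
    have hk2 : (2:ℝ) ≤ (k:ℝ) := by exact_mod_cast hk
    rcases hε₀ with h | h | h
    · rw [hcdef, h]; simp; linarith
    · rw [hcdef, h]; simp; linarith
    · have hk4' : (4:ℝ) ≤ (k:ℝ) := by exact_mod_cast hk4 h
      rw [hcdef, h]; simp; linarith
  obtain ⟨x, hxpos, hxmono, heq⟩ := exists_critical n k hn hk1 c hc
  have hxne : ∀ l, (x l : ℂ) ≠ 0 := fun l => by exact_mod_cast (hxpos l).ne'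
  have hpowne : ∀ a b : Fin n, a ≠ b → ((x a : ℂ)) ^ k ≠ ((x b : ℂ)) ^ k := by
    intro a b hab
    have : x a ^ k ≠ x b ^ k := by
      rcases lt_or_gt_of_ne hab with h | h
      · exact ne_of_lt (pow_lt_pow_left₀ (hxmono h) (hxpos a).le hk0)
      · exact ne_of_gt (pow_lt_pow_left₀ (hxmono h) (hxpos b).le hk0)
    intro hcon
    exact this (by exact_mod_cast hcon)
  -- complexified critical equation
  have hC : ∀ l, (x l : ℂ) - (((k:ℂ)-1)/2 - ε₀)/(x l : ℂ)
      - ∑ l' ∈ Finset.univ.erase l, (k:ℂ) * (x l : ℂ)^(k-1) / ((x l : ℂ)^k - (x l' : ℂ)^k) = 0 := by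
    intro l
    have h0 := heq l
    have h1 : ((x l - c / x l
        - ∑ l' ∈ Finset.univ.erase l, (k : ℝ) * x l ^ (k-1) / (x l ^ k - x l' ^ k) : ℝ) : ℂ) = 0 := by
      rw [h0]; norm_num
    rw [hcdef] at h1
    push_cast at h1
    rw [hre] at h1
    linear_combination h1
  refine ⟨x, hxpos, hxmono, ?_, ?_⟩
  · rintro ⟨l, m⟩
    rw [force]
    set u : ℂ := φ ^ (m : ℕ) with hudef
    have hu : u ^ k = 1 := by rw [hudef, ← pow_mul, mul_comm, pow_mul, hφk, one_pow]
    have hu0 : u ≠ 0 := pow_ne_zero _ hφ0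
    have hw : u ^ (k-1) = u⁻¹ := by
      have h1 : u * u ^ (k-1) = 1 := by
        rw [← pow_succ', Nat.sub_add_cancel hk1, hu]
      exact eq_inv_of_mul_eq_one_right h1
    have habs : ‖u‖ = 1 := by
      have h1 : ‖u‖ ^ k = 1 := by rw [← norm_pow, hu, norm_one]
      have h0 : 0 ≤ ‖u‖ := norm_nonneg u
      rcases lt_trichotomy (‖u‖) 1 with h | h | h
      · exact absurd h1 (by have := pow_lt_one₀ h0 h hk0; linarith)
      · exact h
      · exact absurd h1 (by have := one_lt_pow₀ h hk0; linarith)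
    have hconju : (starRingEnd ℂ) u = u⁻¹ := (Complex.inv_eq_conj habs).symm
    have hzero : (fun i : (Fin n × Fin k) ⊕ Unit =>
        (match i with
          | Sum.inl _ => (-1 : ℂ)
          | Sum.inr _ => ε₀) /
          ((match (Sum.inl (l, m) : (Fin n × Fin k) ⊕ Unit) with
            | Sum.inl (l, m) => (x l : ℂ) * φ ^ (m : ℕ)
            | Sum.inr _ => 0) -
           (match i with
            | Sum.inl (l, m) => (x l : ℂ) * φ ^ (m : ℕ)
            | Sum.inr _ => 0))) (Sum.inl (l, m)) = 0 := by
      simp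
    rw [Finset.sum_erase _ (by simpa using hzero)]
    rw [Fintype.sum_sum_type]
    simp only [Fintype.sum_prod_type]
    -- inner sum for l' = l
    have hFl : ∑ m' : Fin k, (-1 : ℂ) / ((x l : ℂ) * u - (x l : ℂ) * φ ^ (m' : ℕ))
        = -((x l : ℂ)⁻¹ * (u⁻¹ * (((k:ℂ)-1)/2))) := by
      have h1 : ∀ m' : Fin k, (-1 : ℂ) / ((x l : ℂ) * u - (x l : ℂ) * φ ^ (m' : ℕ))
          = -((x l : ℂ)⁻¹ * (u - φ ^ (m' : ℕ))⁻¹) := by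
        intro m'
        have h2 : (x l : ℂ) * u - (x l : ℂ) * φ ^ (m' : ℕ)
            = (x l : ℂ) * (u - φ ^ (m' : ℕ)) := by ring
        rw [h2, neg_div, one_div, mul_inv]
      rw [Finset.sum_congr rfl (fun m' _ => h1 m'), Finset.sum_neg_distrib, ← Finset.mul_sum]
      have hS := sum_inv_pow_sub_pow k (by omega) hφ m
      simp only [one_div] at hS
      rw [← Finset.sum_erase (Finset.univ) (f := fun m' : Fin k => (u - φ ^ (m' : ℕ))⁻¹)
        (a := m) (show (fun m' : Fin k => (u - φ ^ (m' : ℕ))⁻¹) m = (0:ℂ) by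
          simp only [hudef, sub_self, inv_zero])]
      have hS' : ∑ m' ∈ (Finset.univ : Finset (Fin k)).erase m, (u - φ ^ ((m' : ℕ)))⁻¹
          = u⁻¹ * (((k:ℂ) - 1) / 2) := by
        rw [hudef]
        exact hS
      rw [hS']
    -- inner sum for l' ≠ l
    have hFne : ∀ l' : Fin n, l' ≠ l →
        ∑ m' : Fin k, (-1 : ℂ) / ((x l : ℂ) * u - (x l' : ℂ) * φ ^ (m' : ℕ))
        = -((k:ℂ) * ((x l : ℂ)^(k-1) * u⁻¹) / ((x l : ℂ)^k - (x l' : ℂ)^k)) := by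
      intro l' hl'
      have hzk : ((x l : ℂ) * u) ^ k = (x l : ℂ) ^ k := by
        rw [mul_pow, hu, mul_one]
      have hzkne : ((x l : ℂ) * u) ^ k ≠ ((x l' : ℂ)) ^ k := by
        rw [hzk]; exact hpowne l l' (Ne.symm hl')
      have h1 : ∀ m' : Fin k, (-1 : ℂ) / ((x l : ℂ) * u - (x l' : ℂ) * φ ^ (m' : ℕ))
          = -(1 / ((x l : ℂ) * u - (x l' : ℂ) * φ ^ (m' : ℕ))) := by
        intro m'; rw [neg_div]
      rw [Finset.sum_congr rfl (fun m' _ => h1 m'), Finset.sum_neg_distrib]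
      rw [Fin.sum_univ_eq_sum_range (fun i => 1 / ((x l : ℂ) * u - (x l' : ℂ) * φ ^ i)) k]
      rw [sum_inv_sub_roots k (by omega) hφ _ _ hzkne]
      rw [hzk]
      have h2 : ((x l : ℂ) * u) ^ (k-1) = (x l : ℂ)^(k-1) * u⁻¹ := by
        rw [mul_pow, hw]
      rw [h2]
    simp only [← hudef]
    rw [← Finset.add_sum_erase _ _ (Finset.mem_univ l)]
    rw [hFl]
    rw [Finset.sum_congr rfl (fun l' hl' => hFne l' (Finset.ne_of_mem_erase hl'))]
    have hfact : ∑ l' ∈ Finset.univ.erase l,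
        -((k:ℂ) * ((x l : ℂ)^(k-1) * u⁻¹) / ((x l : ℂ)^k - (x l' : ℂ)^k))
        = -(u⁻¹ * ∑ l' ∈ Finset.univ.erase l,
            (k:ℂ) * (x l : ℂ)^(k-1) / ((x l : ℂ)^k - (x l' : ℂ)^k)) := by
      rw [Finset.mul_sum, ← Finset.sum_neg_distrib]
      exact Finset.sum_congr rfl (fun l' _ => by ring)
    rw [hfact]
    rw [map_mul, Complex.conj_ofReal, hconju]
    simp only [sub_zero, Fintype.sum_unique]
    linear_combination u⁻¹ * hC l
  · intro hne0
    rw [force]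
    have hzero : (fun i : (Fin n × Fin k) ⊕ Unit =>
        (match i with
          | Sum.inl _ => (-1 : ℂ)
          | Sum.inr _ => ε₀) /
          ((match (Sum.inr () : (Fin n × Fin k) ⊕ Unit) with
            | Sum.inl (l, m) => (x l : ℂ) * φ ^ (m : ℕ)
            | Sum.inr _ => 0) -
           (match i with
            | Sum.inl (l, m) => (x l : ℂ) * φ ^ (m : ℕ)
            | Sum.inr _ => 0))) (Sum.inr ()) = 0 := by
      simp
    rw [Finset.sum_erase _ (by simpa using hzero)]
    rw [Fintype.sum_sum_type]
    simp only [Fintype.sum_prod_type]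
    have hinner : ∀ l' : Fin n, ∑ m' : Fin k,
        (-1 : ℂ) / ((0:ℂ) - (x l' : ℂ) * φ ^ (m' : ℕ)) = 0 := by
      intro l'
      have h1 : ∀ m' : Fin k, (-1 : ℂ) / ((0:ℂ) - (x l' : ℂ) * φ ^ (m' : ℕ))
          = (x l' : ℂ)⁻¹ * (φ⁻¹) ^ (m' : ℕ) := by
        intro m'
        rw [zero_sub, div_neg, neg_div, neg_neg, one_div, mul_inv, inv_pow]
      rw [Finset.sum_congr rfl (fun m' _ => h1 m'), ← Finset.mul_sum]
      have h2 : ∑ m' : Fin k, (φ⁻¹) ^ (m' : ℕ) = 0 := by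
        rw [Fin.sum_univ_eq_sum_range (fun i => (φ⁻¹) ^ i) k]
        rw [geom_sum_eq (by simpa [inv_eq_one] using hφ1)]
        simp [inv_pow, hφk]
      rw [h2, mul_zero]
    simp only [map_zero]
    rw [Finset.sum_congr rfl (fun l' _ => hinner l')]
    simp
end

section
/- (Reduced balance equations for all-negative dihedral configurations) Let n ≥ 1, k ≥ 2 be integers and ε₀ ∈ {−1, 0, 1}, with k ≥ 4 in case ε₀ = 1. Then there exist real numbers 0 < p₁ < p₂ < … < pₙ such that for every j = 1, …, n: p_j − (k − 1 − 2ε₀)/(2p_j) − Σ_{l≠j} k·p_j^{k−1}/(p_j^k − p_l^k) = 0. -/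
open Finset

noncomputable def Egy (n k : ℕ) (c : ℝ) (p : Fin n → ℝ) : ℝ :=
  (∑ j, ((p j)^2/2 - c/2 * Real.log (p j)))
    - ∑ i, ∑ l ∈ Finset.Ioi i, Real.log ((p l)^k - (p i)^k)

theorem gap_pos {n k : ℕ} (hk : 1 ≤ k) {x : Fin n → ℝ} (hx : ∀ l, 0 < x l)
    (hm : StrictMono x) {i l : Fin n} (hil : i < l) : 0 < (x l)^k - (x i)^k := by
  have := pow_lt_pow_left₀ (hm hil) (hx i).le (by omega : k ≠ 0)
  linarith

theorem hasDeriv_slice (n k : ℕ) (hk : 1 ≤ k) (c : ℝ) (x : Fin n → ℝ)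
    (hx : ∀ l, 0 < x l) (hm : StrictMono x) (j : Fin n) :
    HasDerivAt (fun t => Egy n k c (Function.update x j t))
      (x j - c/(2 * x j) - ∑ l ∈ Finset.univ.erase j,
        (k : ℝ) * x j^(k-1)/(x j^k - x l^k)) (x j) := by
  classical
  set f' : Fin n → ℝ := fun m => (k:ℝ) * x j^(k-1)/(x j^k - x m^k) with hf'
  set df : Fin n → ℝ := fun i => if i = j then x j - c/2 * (x j)⁻¹ else 0 with hdf
  set dg : Fin n → Fin n → ℝ := fun i l =>
    if i = j then (-((k:ℝ) * x j^(k-1)))/((x l)^k - (x j)^k)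
    else if l = j then ((k:ℝ) * x j^(k-1))/((x j)^k - (x i)^k) else 0 with hdg
  have key : HasDerivAt (fun t => Egy n k c (Function.update x j t))
      ((∑ i, df i) - ∑ i, ∑ l ∈ Finset.Ioi i, dg i l) (x j) := by
    unfold Egy
    apply HasDerivAt.sub
    · apply HasDerivAt.fun_sum
      intro i _
      rcases eq_or_ne i j with h | h
      · subst h
        simp only [hdf, if_pos rfl]
        have h1 : HasDerivAt (fun t : ℝ => (Function.update x i t i)^2/2)
            (x i) (x i) := by
          simp only [Function.update_self]
          have := (hasDerivAt_pow 2 (x i)).div_const 2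
          exact this.congr_deriv (by norm_num)
        have h2 : HasDerivAt (fun t : ℝ => c/2 * Real.log (Function.update x i t i))
            (c/2 * (x i)⁻¹) (x i) := by
          simp only [Function.update_self]
          exact (Real.hasDerivAt_log (ne_of_gt (hx i))).const_mul (c/2)
        exact h1.sub h2
      · simp only [hdf, if_neg h, Function.update_of_ne h]
        exact hasDerivAt_const _ _
    · apply HasDerivAt.fun_sum
      intro i _
      apply HasDerivAt.fun_sum
      intro l hl
      have hil : i < l := Finset.mem_Ioi.mp hl
      rcases eq_or_ne i j with h | h
      · subst h
        have hlj : l ≠ i := ne_of_gt hil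
        simp only [hdg, if_pos rfl, Function.update_of_ne hlj, Function.update_self]
        have hin : HasDerivAt (fun t : ℝ => (x l)^k - t^k)
            (0 - (k:ℝ) * x i^(k-1)) (x i) :=
          (hasDerivAt_const _ _).sub (hasDerivAt_pow k (x i))
        have hne : (x l)^k - (x i)^k ≠ 0 := (gap_pos hk hx hm hil).ne'
        have := hin.log hne
        exact this.congr_deriv (by simp)
      · rcases eq_or_ne l j with h2 | h2
        · subst h2
          simp only [hdg, if_neg h, if_pos rfl, Function.update_of_ne h,
            Function.update_self]
          have hin : HasDerivAt (fun t : ℝ => t^k - (x i)^k)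
              ((k:ℝ) * x l^(k-1) - 0) (x l) :=
            (hasDerivAt_pow k (x l)).sub (hasDerivAt_const _ _)
          have hne : (x l)^k - (x i)^k ≠ 0 := (gap_pos hk hx hm hil).ne'
          have := hin.log hne
          exact this.congr_deriv (by simp)
        · simp only [hdg, if_neg h, if_neg h2, Function.update_of_ne h,
            Function.update_of_ne h2]
          exact hasDerivAt_const _ _
  convert key using 1
  have e1 : (∑ i, df i) = x j - c/2 * (x j)⁻¹ := by
    simp [hdf, Finset.sum_ite_eq']
  have e2 : (∑ i, ∑ l ∈ Finset.Ioi i, dg i l) = ∑ l ∈ Finset.univ.erase j, f' l := by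
    rw [← Finset.add_sum_erase _ (fun i => ∑ l ∈ Finset.Ioi i, dg i l)
      (Finset.mem_univ j)]
    have t1 : ∑ l ∈ Finset.Ioi j, dg j l = ∑ l ∈ Finset.Ioi j, f' l := by
      apply Finset.sum_congr rfl
      intro l _
      simp only [hdg, if_pos rfl, hf']
      rw [show (x l)^k - (x j)^k = -((x j)^k - (x l)^k) by ring, div_neg, neg_div, neg_neg]
    have t2 : ∑ i ∈ Finset.univ.erase j, ∑ l ∈ Finset.Ioi i, dg i l
        = ∑ i ∈ Finset.Iio j, f' i := by
      have : ∀ i ∈ Finset.univ.erase j, (∑ l ∈ Finset.Ioi i, dg i l)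
          = if j ∈ Finset.Ioi i then f' i else 0 := by
        intro i hi
        have hij : i ≠ j := (Finset.mem_erase.mp hi).1
        have : ∀ l, dg i l = if l = j then f' i else 0 := by
          intro l; simp only [hdg, if_neg hij, hf']
        simp only [this]
        exact Finset.sum_ite_eq' _ _ _
      rw [Finset.sum_congr rfl this]
      simp only [Finset.mem_Ioi]
      rw [← Finset.sum_filter]
      apply Finset.sum_congr _ (fun _ _ => rfl)
      ext m
      simp only [Finset.mem_filter, Finset.mem_erase, Finset.mem_univ, true_and, and_true,
        Finset.mem_Iio]
      exact ⟨fun h => h.2, fun h => ⟨ne_of_lt h, h⟩⟩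
    rw [t1, t2]
    have hun : Finset.univ.erase j = Finset.Iio j ∪ Finset.Ioi j := by
      ext m
      simp only [Finset.mem_erase, Finset.mem_univ, and_true, Finset.mem_union,
        Finset.mem_Iio, Finset.mem_Ioi]
      exact ⟨fun h => lt_or_gt_of_ne h, fun h => h.elim ne_of_lt ne_of_gt⟩
    have hdisj : Disjoint (Finset.Iio j) (Finset.Ioi j) := by
      rw [Finset.disjoint_left]
      intro m h1 h2
      exact absurd (Finset.mem_Ioi.mp h2) (not_lt.mpr (le_of_lt (Finset.mem_Iio.mp h1)))
    rw [hun, Finset.sum_union hdisj]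
    ring
  rw [e1, e2]
  simp only [hf']
  ring

theorem log_gap_le {n k : ℕ} (hk : 1 ≤ k) {x : Fin n → ℝ} (hx : ∀ l, 0 < x l)
    (hm : StrictMono x) {R : ℝ} (hxR : ∀ j, x j ≤ R) {i l : Fin n} (hil : i < l) :
    Real.log ((x l)^k - (x i)^k) ≤ (k:ℝ) * Real.log R := by
  have h1 : (x l)^k - (x i)^k ≤ R^k := by
    have := pow_le_pow_left₀ (hx l).le (hxR l) k
    have := pow_pos (hx i) k
    linarith
  calc Real.log ((x l)^k - (x i)^k) ≤ Real.log (R^k) :=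
        Real.log_le_log (gap_pos hk hx hm hil) h1
    _ = (k:ℝ) * Real.log R := by rw [Real.log_pow]

theorem inner_gaps_le {n k : ℕ} (hk : 1 ≤ k) {x : Fin n → ℝ} (hx : ∀ l, 0 < x l)
    (hm : StrictMono x) {R : ℝ} (hR : 1 ≤ R) (hxR : ∀ j, x j ≤ R) (i : Fin n)
    (s : Finset (Fin n)) (hs : s ⊆ Finset.Ioi i) :
    ∑ l ∈ s, Real.log ((x l)^k - (x i)^k) ≤ (n:ℝ) * ((k:ℝ) * Real.log R) := by
  have hklR : 0 ≤ (k:ℝ) * Real.log R := by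
    have := Real.log_nonneg hR
    positivity
  calc ∑ l ∈ s, Real.log ((x l)^k - (x i)^k)
      ≤ ∑ _l ∈ s, (k:ℝ) * Real.log R := by
        apply Finset.sum_le_sum
        intro l hl
        exact log_gap_le hk hx hm hxR (Finset.mem_Ioi.mp (hs hl))
    _ = (s.card : ℝ) * ((k:ℝ) * Real.log R) := by
        rw [Finset.sum_const, nsmul_eq_mul]
    _ ≤ (n:ℝ) * ((k:ℝ) * Real.log R) := by
        apply mul_le_mul_of_nonneg_right _ hklR
        have : s.card ≤ n := by
          have := Finset.card_le_card (Finset.subset_univ s)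
          simpa using this
        exact_mod_cast this

theorem sum_gaps_le {n k : ℕ} (hk : 1 ≤ k) {x : Fin n → ℝ} (hx : ∀ l, 0 < x l)
    (hm : StrictMono x) {R : ℝ} (hR : 1 ≤ R) (hxR : ∀ j, x j ≤ R) :
    ∑ i, ∑ l ∈ Finset.Ioi i, Real.log ((x l)^k - (x i)^k)
      ≤ (n:ℝ) * ((n:ℝ) * ((k:ℝ) * Real.log R)) := by
  calc ∑ i, ∑ l ∈ Finset.Ioi i, Real.log ((x l)^k - (x i)^k)
      ≤ ∑ _i : Fin n, (n:ℝ) * ((k:ℝ) * Real.log R) :=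
        Finset.sum_le_sum fun i _ =>
          inner_gaps_le hk hx hm hR hxR i _ (Finset.Subset.refl _)
    _ = (n:ℝ) * ((n:ℝ) * ((k:ℝ) * Real.log R)) := by
        rw [Finset.sum_const, nsmul_eq_mul]
        simp [mul_assoc]

theorem sum_gaps_le' {n k : ℕ} (hk : 1 ≤ k) {x : Fin n → ℝ} (hx : ∀ l, 0 < x l)
    (hm : StrictMono x) {R : ℝ} (hR : 1 ≤ R) (hxR : ∀ j, x j ≤ R)
    {i0 l0 : Fin n} (h0 : i0 < l0) :
    ∑ i, ∑ l ∈ Finset.Ioi i, Real.log ((x l)^k - (x i)^k)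
      ≤ Real.log ((x l0)^k - (x i0)^k)
        + ((n:ℝ) * ((k:ℝ) * Real.log R) + (n:ℝ) * ((n:ℝ) * ((k:ℝ) * Real.log R))) := by
  classical
  have hklR : 0 ≤ (k:ℝ) * Real.log R := by
    have := Real.log_nonneg hR
    positivity
  rw [← Finset.add_sum_erase _ _ (Finset.mem_univ i0)]
  have hsp : ∑ l ∈ Finset.Ioi i0, Real.log ((x l)^k - (x i0)^k)
      ≤ Real.log ((x l0)^k - (x i0)^k) + (n:ℝ) * ((k:ℝ) * Real.log R) := by
    rw [← Finset.add_sum_erase _ _ (Finset.mem_Ioi.mpr h0)]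
    have := inner_gaps_le hk hx hm hR hxR i0 ((Finset.Ioi i0).erase l0)
      (Finset.erase_subset _ _)
    linarith
  have hrest : ∑ i ∈ Finset.univ.erase i0, ∑ l ∈ Finset.Ioi i,
      Real.log ((x l)^k - (x i)^k) ≤ (n:ℝ) * ((n:ℝ) * ((k:ℝ) * Real.log R)) := by
    calc ∑ i ∈ Finset.univ.erase i0, ∑ l ∈ Finset.Ioi i, Real.log ((x l)^k - (x i)^k)
        ≤ ∑ _i ∈ Finset.univ.erase i0, (n:ℝ) * ((k:ℝ) * Real.log R) :=
          Finset.sum_le_sum fun i _ =>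
            inner_gaps_le hk hx hm hR hxR i _ (Finset.Subset.refl _)
      _ = ((Finset.univ.erase i0).card : ℝ) * ((n:ℝ) * ((k:ℝ) * Real.log R)) := by
          rw [Finset.sum_const, nsmul_eq_mul]
      _ ≤ (n:ℝ) * ((n:ℝ) * ((k:ℝ) * Real.log R)) := by
          apply mul_le_mul_of_nonneg_right _ (by positivity)
          have : (Finset.univ.erase i0).card ≤ n := by
            have := Finset.card_le_card (Finset.subset_univ (Finset.univ.erase i0))
            simpa using this
          exact_mod_cast this
  linarith

theorem egy_contOn (n k : ℕ) (hk : 1 ≤ k) (c : ℝ) (K : Set (Fin n → ℝ))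
    (hK : ∀ p ∈ K, (∀ j, 0 < p j) ∧ StrictMono p) :
    ContinuousOn (Egy n k c) K := by
  unfold Egy
  apply ContinuousOn.sub
  · apply continuousOn_finset_sum
    intro j _
    apply ContinuousOn.sub
    · exact (((continuous_apply j).pow 2).continuousOn).div_const 2
    · apply ContinuousOn.mul continuousOn_const
      apply ContinuousOn.log (continuous_apply j).continuousOn
      intro p hp
      exact ne_of_gt ((hK p hp).1 j)
  · apply continuousOn_finset_sum
    intro i _
    apply continuousOn_finset_sum
    intro l hl
    apply ContinuousOn.log
    · exact (((continuous_apply l).pow k).sub ((continuous_apply i).pow k)).continuousOn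
    · intro p hp
      exact ne_of_gt (gap_pos hk (hK p hp).1 (hK p hp).2 (Finset.mem_Ioi.mp hl))
theorem sum_log_le {n : ℕ} {x : Fin n → ℝ} (hx : ∀ l, 0 < x l) {R : ℝ}
    (hR : 1 ≤ R) (hxR : ∀ j, x j ≤ R) (s : Finset (Fin n)) :
    ∑ j ∈ s, Real.log (x j) ≤ (n:ℝ) * Real.log R := by
  have hlogR0 : 0 ≤ Real.log R := Real.log_nonneg hR
  calc ∑ j ∈ s, Real.log (x j) ≤ ∑ _j ∈ s, Real.log R :=
        Finset.sum_le_sum fun j _ => Real.log_le_log (hx j) (hxR j)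
    _ = (s.card : ℝ) * Real.log R := by rw [Finset.sum_const, nsmul_eq_mul]
    _ ≤ (n:ℝ) * Real.log R := by
        apply mul_le_mul_of_nonneg_right _ hlogR0
        have : s.card ≤ n := by
          have := Finset.card_le_card (Finset.subset_univ s)
          simpa using this
        exact_mod_cast this

set_option maxHeartbeats 1000000 in
/-- (Reduced balance equations for all-negative dihedral configurations)
For integers `n ≥ 1`, `k ≥ 2` and `ε₀ ∈ {-1, 0, 1}` (with `k ≥ 4` when `ε₀ = 1`),
there exist `0 < p 1 < ⋯ < p n` solving, for every `j`,
`p j - (k - 1 - 2ε₀)/(2 p j) - ∑_{l ≠ j} k p j^{k-1}/(p j^k - p l^k) = 0`. -/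
theorem reduced_balance_equations (n k : ℕ) (hn : 1 ≤ n) (hk : 2 ≤ k)
    (ε₀ : ℝ) (hε₀ : ε₀ = -1 ∨ ε₀ = 0 ∨ ε₀ = 1) (hk4 : ε₀ = 1 → 4 ≤ k) :
    ∃ p : Fin n → ℝ, (∀ l, 0 < p l) ∧ StrictMono p ∧
      ∀ j : Fin n,
        p j - ((k : ℝ) - 1 - 2 * ε₀) / (2 * p j)
          - ∑ l ∈ Finset.univ.erase j,
              (k : ℝ) * p j ^ (k - 1) / (p j ^ k - p l ^ k) = 0 := by
  classical
  have hk1 : 1 ≤ k := by omega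
  set c : ℝ := (k : ℝ) - 1 - 2 * ε₀ with hc_def
  have hkR : (2:ℝ) ≤ (k:ℝ) := by exact_mod_cast hk
  have hkR0 : (0:ℝ) ≤ (k:ℝ) := by linarith
  have hc : 1 ≤ c := by
    rcases hε₀ with h | h | h
    · rw [hc_def, h]; linarith
    · rw [hc_def, h]; linarith
    · have : (4:ℝ) ≤ (k:ℝ) := by exact_mod_cast hk4 h
      rw [hc_def, h]; linarith
  clear_value c
  set D : Set (Fin n → ℝ) := {p | (∀ l, 0 < p l) ∧ StrictMono p} with hD_def
  set p₀ : Fin n → ℝ := fun i => ((i : ℕ) : ℝ) + 1 with hp₀_def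
  have hp₀pos : ∀ l, 0 < p₀ l := fun l => by
    simp only [hp₀_def]; positivity
  have hp₀mono : StrictMono p₀ := by
    intro a b hab
    simp only [hp₀_def]
    have h1 : (a:ℕ) < (b:ℕ) := hab
    have h2 : ((a:ℕ):ℝ) < ((b:ℕ):ℝ) := by exact_mod_cast h1
    linarith
  clear_value p₀
  set M : ℝ := Egy n k c p₀ with hM_def
  clear_value M
  set A : ℝ := (c/2) * n + (n:ℝ) * n * k + (n:ℝ) * k with hA_def
  clear_value A
  have hn1 : (1:ℝ) ≤ (n:ℝ) := by exact_mod_cast hn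
  have hA0 : 0 < A := by
    rw [hA_def]
    have h2 : (0:ℝ) ≤ (n:ℝ) * n * k := by positivity
    have h3 : (0:ℝ) ≤ (n:ℝ) * k := by positivity
    nlinarith [mul_le_mul hc hn1 (by linarith : (0:ℝ) ≤ 1) (by linarith : (0:ℝ) ≤ c)]
  set R : ℝ := max (n:ℝ) (2*A + 2*|M| + 2) with hR_def
  have hR1' : 1 ≤ R := le_trans (by exact_mod_cast hn) (le_max_left _ _)
  have hR1 : 1 ≤ R := le_trans hn1 (le_max_left _ _)
  have hRn : (n:ℝ) ≤ R := le_max_left _ _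
  have hRA : 2*A + 2*|M| + 2 ≤ R := le_max_right _ _
  clear_value R
  have hlogR0 : 0 ≤ Real.log R := Real.log_nonneg hR1
  set B : ℝ := A * Real.log R with hB_def
  have hB0 : 0 ≤ B := by rw [hB_def]; exact mul_nonneg hA0.le hlogR0
  clear_value B
  have habs : 0 ≤ |M| := abs_nonneg M
  set δ : ℝ := Real.exp (-(2*(B+|M|+1))) with hδ_def
  set η : ℝ := Real.exp (-(B+|M|+1)) with hη_def
  have hδ0 : 0 < δ := Real.exp_pos _
  have hη0 : 0 < η := Real.exp_pos _
  clear_value δ η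
  have hδ1 : δ ≤ 1 := by
    rw [hδ_def]
    apply Real.exp_le_one_iff.mpr
    linarith
  have hη1 : η ≤ 1 := by
    rw [hη_def]
    apply Real.exp_le_one_iff.mpr
    linarith
  set K : Set (Fin n → ℝ) := {p | (∀ j, p j ∈ Set.Icc δ R) ∧
      ∀ i l : Fin n, i < l → η ≤ (p l)^k - (p i)^k} with hK_def
  have hKD : K ⊆ D := by
    rintro p ⟨h1, h2⟩
    have hpos : ∀ l, 0 < p l := fun l => lt_of_lt_of_le hδ0 (h1 l).1
    refine ⟨hpos, ?_⟩
    intro a b hab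
    have h3 := h2 a b hab
    have hlt : (p a)^k < (p b)^k := by linarith
    exact lt_of_pow_lt_pow_left₀ k (hpos b).le hlt
  have hp₀K : p₀ ∈ K := by
    constructor
    · intro j
      constructor
      · refine le_trans hδ1 ?_
        simp only [hp₀_def]
        have : (0:ℝ) ≤ ((j:ℕ):ℝ) := Nat.cast_nonneg _
        linarith
      · refine le_trans ?_ hRn
        simp only [hp₀_def]
        have : (j:ℕ) + 1 ≤ n := j.isLt
        exact_mod_cast this
    · intro i l hil
      have hnat : ((i:ℕ)+1)^k + 1 ≤ ((l:ℕ)+1)^k := by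
        have h1 : (i:ℕ)+1 < (l:ℕ)+1 := Nat.succ_lt_succ hil
        have h2 := Nat.pow_lt_pow_left h1 (by omega : k ≠ 0)
        omega
      have hcast : (((i:ℕ):ℝ)+1)^k + 1 ≤ (((l:ℕ):ℝ)+1)^k := by exact_mod_cast hnat
      simp only [hp₀_def]
      linarith
  have hKc : IsCompact K := by
    have hsub : K ⊆ Set.Icc (fun _ => δ) (fun _ => R) := by
      rintro p ⟨h1, _⟩
      exact ⟨fun j => (h1 j).1, fun j => (h1 j).2⟩
    have hclosed : IsClosed K := by
      have e : K = (⋂ j, (fun p : Fin n → ℝ => p j) ⁻¹' Set.Icc δ R) ∩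
          (⋂ i, ⋂ l, ⋂ (_ : i < l),
            (fun p : Fin n → ℝ => (p l)^k - (p i)^k) ⁻¹' Set.Ici η) := by
        ext p
        simp only [hK_def, Set.mem_setOf_eq, Set.mem_inter_iff, Set.mem_iInter,
          Set.mem_preimage, Set.mem_Ici]
      rw [e]
      apply IsClosed.inter
      · exact isClosed_iInter fun j => isClosed_Icc.preimage (continuous_apply j)
      · refine isClosed_iInter fun i => isClosed_iInter fun l =>
          isClosed_iInter fun _ => isClosed_Ici.preimage ?_
        exact ((continuous_apply l).pow k).sub ((continuous_apply i).pow k)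
    exact isCompact_Icc.of_isClosed_subset hclosed hsub
  have hfirstle : ∀ p : Fin n → ℝ, StrictMono p → ∀ j, p ⟨0, hn⟩ ≤ p j := by
    intro p hm j
    apply hm.monotone
    rw [Fin.le_def]
    exact Nat.zero_le _
  have hcoerc : ∀ p, p ∈ D → p ∉ K → M < Egy n k c p := by
    rintro p ⟨hpos, hmono⟩ hpK
    have hppow : ∀ i l : Fin n, i < l → 0 < (p l)^k - (p i)^k :=
      fun i l h => gap_pos hk1 hpos hmono h
    have hEgy : Egy n k c p = (∑ j, ((p j)^2/2 - c/2 * Real.log (p j)))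
        - ∑ i, ∑ l ∈ Finset.Ioi i, Real.log ((p l)^k - (p i)^k) := rfl
    have hsq0 : (0:ℝ) ≤ ∑ j, (p j)^2/2 := by positivity
    by_cases h1 : ∀ j, p j ≤ R
    · have hslR : ∑ j, Real.log (p j) ≤ (n:ℝ) * Real.log R :=
        sum_log_le hpos hR1 h1 _
      by_cases h2 : δ ≤ p ⟨0, hn⟩
      · -- small gap case
        have hall : ∀ j, δ ≤ p j := fun j => le_trans h2 (hfirstle p hmono j)
        have hex : ∃ i l, i < l ∧ (p l)^k - (p i)^k < η := by
          by_contra hcon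
          push_neg at hcon
          exact hpK ⟨fun j => ⟨hall j, h1 j⟩, fun i l h => hcon i l h⟩
        obtain ⟨i0, l0, h0, hgap⟩ := hex
        have hS2 := sum_gaps_le' hk1 hpos hmono hR1 h1 h0
        have hS1 : -(c/2) * ((n:ℝ) * Real.log R)
            ≤ ∑ j, ((p j)^2/2 - c/2 * Real.log (p j)) := by
          rw [Finset.sum_sub_distrib, ← Finset.mul_sum]
          have := mul_le_mul_of_nonneg_left hslR (by linarith : (0:ℝ) ≤ c/2)
          linarith
        have hloggap : Real.log ((p l0)^k - (p i0)^k) < -(B + |M| + 1) := by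
          have h5 := Real.log_lt_log (hppow i0 l0 h0) hgap
          rw [hη_def, Real.log_exp] at h5
          exact h5
        have hAB : (c/2)*((n:ℝ)*Real.log R)
            + ((n:ℝ)*((k:ℝ)*Real.log R) + (n:ℝ)*((n:ℝ)*((k:ℝ)*Real.log R))) = B := by
          rw [hB_def, hA_def]; ring
        rw [hEgy]
        have hMabs := le_abs_self M
        linarith
      · push_neg at h2
        have hslE : ∑ j ∈ Finset.univ.erase (⟨0, hn⟩ : Fin n), Real.log (p j)
            ≤ (n:ℝ) * Real.log R := sum_log_le hpos hR1 h1 _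
        have hsl : ∑ j, Real.log (p j)
            ≤ Real.log (p ⟨0, hn⟩) + (n:ℝ) * Real.log R := by
          rw [← Finset.add_sum_erase _ _ (Finset.mem_univ (⟨0, hn⟩ : Fin n))]
          linarith
        have hlp0neg : Real.log (p ⟨0, hn⟩) < 0 :=
          Real.log_neg (hpos _) (lt_of_lt_of_le h2 hδ1)
        have hS1 : -(1/2) * Real.log (p ⟨0, hn⟩) - (c/2)*((n:ℝ)*Real.log R)
            ≤ ∑ j, ((p j)^2/2 - c/2 * Real.log (p j)) := by
          rw [Finset.sum_sub_distrib, ← Finset.mul_sum]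
          have h6 := mul_le_mul_of_nonneg_left hsl (by linarith : (0:ℝ) ≤ c/2)
          nlinarith [mul_nonneg (by linarith : (0:ℝ) ≤ c - 1)
            (by linarith : (0:ℝ) ≤ -Real.log (p ⟨0, hn⟩))]
        have hS2 := sum_gaps_le hk1 hpos hmono hR1 h1
        have hL0 : Real.log (p ⟨0, hn⟩) < -(2*(B+|M|+1)) := by
          have h5 := Real.log_lt_log (hpos _) h2
          rw [hδ_def, Real.log_exp] at h5
          exact h5
        have hAB : (c/2)*((n:ℝ)*Real.log R) + (n:ℝ)*((n:ℝ)*((k:ℝ)*Real.log R))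
            + (n:ℝ)*((k:ℝ)*Real.log R) = B := by
          rw [hB_def, hA_def]; ring
        have hnk0 : 0 ≤ (n:ℝ)*((k:ℝ)*Real.log R) := by positivity
        rw [hEgy]
        have hMabs := le_abs_self M
        linarith
    · push_neg at h1
      obtain ⟨j0, hj0⟩ := h1
      have hjm : ∀ j : Fin n, p j ≤ p ⟨n-1, by omega⟩ := by
        intro j
        apply hmono.monotone
        exact Nat.le_sub_one_of_lt j.isLt
      set P : ℝ := p ⟨n-1, by omega⟩ with hP_def
      have hRP : R < P := lt_of_lt_of_le hj0 (hjm j0)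
      have hP1 : 1 ≤ P := le_trans hR1 hRP.le
      have hP0 : 0 < P := by linarith
      have hlogP0 : 0 ≤ Real.log P := Real.log_nonneg hP1
      have hlogPP : Real.log P ≤ P := by
        have := Real.log_le_sub_one_of_pos hP0
        linarith
      have hS2 := sum_gaps_le hk1 hpos hmono hP1 hjm
      have hsl : ∑ j, Real.log (p j) ≤ (n:ℝ) * Real.log P :=
        sum_log_le hpos hP1 hjm _
      have hsq : P^2/2 ≤ ∑ j, (p j)^2/2 := by
        apply Finset.single_le_sum (f := fun j => (p j)^2/2)
          (fun j _ => by positivity) (Finset.mem_univ _)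
      have hclog : (c/2) * ∑ j, Real.log (p j) ≤ (c/2)*((n:ℝ)*Real.log P) :=
        mul_le_mul_of_nonneg_left hsl (by linarith : (0:ℝ) ≤ c/2)
      have hcoefP : (c/2)*((n:ℝ)*Real.log P) + (n:ℝ)*((n:ℝ)*((k:ℝ)*Real.log P))
          ≤ A * P := by
        have hAeq : A * Real.log P = (c/2)*((n:ℝ)*Real.log P)
            + (n:ℝ)*((n:ℝ)*((k:ℝ)*Real.log P)) + (n:ℝ)*((k:ℝ)*Real.log P) := by
          rw [hA_def]; ring
        have h0 : 0 ≤ (n:ℝ)*((k:ℝ)*Real.log P) := by positivity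
        have h7 := mul_le_mul_of_nonneg_left hlogPP hA0.le
        linarith
      have hfin : M < P^2/2 - A*P := by
        have e1 : (0:ℝ) ≤ P - 2 := by linarith
        have e2 : (0:ℝ) ≤ P/2 - A - |M| - 1 := by linarith
        nlinarith [mul_nonneg e1 e2, mul_nonneg habs e1, le_abs_self M]
      rw [hEgy, Finset.sum_sub_distrib, ← Finset.mul_sum]
      linarith
  obtain ⟨x, hxK, hxmin⟩ := hKc.exists_isMinOn ⟨p₀, hp₀K⟩
    (egy_contOn n k hk1 c K (fun p hp => hKD hp))
  obtain ⟨hxpos, hxmono⟩ := hKD hxK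
  have hglobal : ∀ y ∈ D, Egy n k c x ≤ Egy n k c y := by
    intro y hy
    by_cases hyK : y ∈ K
    · exact hxmin hyK
    · have h2 := hcoerc y hy hyK
      have h3 : Egy n k c x ≤ M := by rw [hM_def]; exact hxmin hp₀K
      linarith
  have hDopen : IsOpen D := by
    have e : D = (⋂ l, {p : Fin n → ℝ | 0 < p l}) ∩
        ⋂ i, ⋂ l, ⋂ (_ : i < l), {p : Fin n → ℝ | p i < p l} := by
      ext p
      simp only [hD_def, Set.mem_setOf_eq, Set.mem_inter_iff, Set.mem_iInter]
      constructor
      · rintro ⟨ha, hb⟩; exact ⟨ha, fun i l h => hb h⟩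
      · rintro ⟨ha, hb⟩; exact ⟨ha, fun i l h => hb i l h⟩
    rw [e]
    apply IsOpen.inter
    · exact isOpen_iInter_of_finite fun l =>
        isOpen_lt continuous_const (continuous_apply l)
    · exact isOpen_iInter_of_finite fun i => isOpen_iInter_of_finite fun l =>
        isOpen_iInter_of_finite fun _ =>
          isOpen_lt (continuous_apply i) (continuous_apply l)
  refine ⟨x, hxpos, hxmono, ?_⟩
  intro j
  have hu : Continuous (fun t : ℝ => Function.update x j t) := by
    apply continuous_pi
    intro i
    rcases eq_or_ne i j with h | h
    · subst h
      simp only [Function.update_self]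
      exact continuous_id
    · simp only [Function.update_of_ne h]
      exact continuous_const
  have hx_up : Function.update x j (x j) = x := Function.update_eq_self j x
  have hlocal : IsLocalMin (fun t => Egy n k c (Function.update x j t)) (x j) := by
    have hmem : (fun t : ℝ => Function.update x j t) ⁻¹' D ∈ nhds (x j) := by
      apply (hDopen.preimage hu).mem_nhds
      rw [Set.mem_preimage, hx_up]
      exact ⟨hxpos, hxmono⟩
    filter_upwards [hmem] with t ht
    have h8 : Egy n k c x ≤ Egy n k c (Function.update x j t) := hglobal _ ht
    simpa [hx_up] using h8
  have hderiv := hasDeriv_slice n k hk1 c x hxpos hxmono j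
  exact hlocal.hasDerivAt_eq_zero hderiv
end

section
/- (Exotic CHM configurations, one positive orbit) Let k ≥ 2 be an integer and ε₀ ∈ {−1, 0}, or k ≥ 4 and ε₀ = 1. Let φ = e^{2πi/k}. Then there exist real numbers p, q > 0 such that the configuration whose points are p·φ^m with charge +1 (m = 0, …, k−1) and q·e^{iπ/k}·φ^m with charge −1 (m = 0, …, k−1), together with the origin with charge ε₀ when ε₀ ≠ 0, is balanced. -/
section CHMhelpers

open Complex Finset


lemma phi_pow_k' {k : ℕ} (hk : 1 ≤ k) : Complex.exp (2 * Real.pi * Complex.I / k) ^ k = 1 := by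
  rw [← Complex.exp_nat_mul]
  have hk0 : (k:ℂ) ≠ 0 := Nat.cast_ne_zero.mpr (by omega)
  rw [show (k:ℂ) * (2 * Real.pi * Complex.I / k) = 2 * Real.pi * Complex.I by
    field_simp]
  exact Complex.exp_two_pi_mul_I

lemma psi_pow_k' {k : ℕ} (hk : 1 ≤ k) : Complex.exp (Real.pi * Complex.I / k) ^ k = -1 := by
  rw [← Complex.exp_nat_mul]
  have hk0 : (k:ℂ) ≠ 0 := Nat.cast_ne_zero.mpr (by omega)
  rw [show (k:ℂ) * (Real.pi * Complex.I / k) = Real.pi * Complex.I by field_simp]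
  exact Complex.exp_pi_mul_I

lemma phi_pow_ne_one' {k : ℕ} {r : ℕ} (h0 : 0 < r) (h1 : r < k) :
    Complex.exp (2 * Real.pi * Complex.I / k) ^ r ≠ 1 := by
  have hk0 : (k:ℂ) ≠ 0 := Nat.cast_ne_zero.mpr (by omega)
  rw [← Complex.exp_nat_mul]
  intro hone
  rw [Complex.exp_eq_one_iff] at hone
  obtain ⟨n, hn⟩ := hone
  have h2 : (2:ℂ) * Real.pi * Complex.I ≠ 0 := by
    simp [Complex.ext_iff, Real.pi_ne_zero]
  have hrc : (r : ℂ) = n * k := by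
    field_simp at hn
    have h3 : (r:ℂ) * (2 * Real.pi * Complex.I) = (n * k) * (2 * Real.pi * Complex.I) := by
      linear_combination (2 * Real.pi * Complex.I) * hn
    exact mul_right_cancel₀ h2 h3
  have hrz : (r : ℤ) = n * k := by exact_mod_cast hrc
  have hdvd : (k:ℤ) ∣ (r:ℤ) := ⟨n, by linarith⟩
  have := Int.le_of_dvd (by exact_mod_cast h0) hdvd
  omega

lemma geom0 {k : ℕ} {x : ℂ} (hx : x ^ k = 1) (h1 : x ≠ 1) :
    ∑ m ∈ range k, x ^ m = 0 := by
  rw [geom_sum_eq h1, hx, sub_self, zero_div]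

lemma sumB {k : ℕ} (hk : 1 ≤ k) {φ : ℂ} (hφk : φ ^ k = 1)
    (hφr : ∀ r : ℕ, 0 < r → r < k → φ ^ r ≠ 1)
    {z w : ℂ} (h : z ^ k ≠ w ^ k) :
    ∑ m ∈ range k, (z - w * φ ^ m)⁻¹ = k * z ^ (k-1) / (z ^ k - w ^ k) := by
  have hD : z ^ k - w ^ k ≠ 0 := sub_ne_zero.mpr h
  have hterm : ∀ m ∈ range k, (z - w * φ ^ m)⁻¹ =
      (∑ j ∈ range k, z ^ j * (w * φ ^ m) ^ (k - 1 - j)) / (z ^ k - w ^ k) := by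
    intro m hm
    have hpow : (w * φ ^ m) ^ k = w ^ k := by
      rw [mul_pow, ← pow_mul, mul_comm m k, pow_mul, hφk, one_pow, mul_one]
    have hne : z - w * φ ^ m ≠ 0 := by
      intro hzero
      apply h
      rw [sub_eq_zero] at hzero
      rw [hzero, hpow]
    have hgs : (∑ j ∈ range k, z ^ j * (w * φ ^ m) ^ (k - 1 - j)) * (z - w * φ ^ m)
        = z ^ k - w ^ k := by
      rw [geom_sum₂_mul, hpow]
    rw [eq_div_iff hD, ← hgs]
    field_simp
  rw [Finset.sum_congr rfl hterm, ← Finset.sum_div]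
  congr 1
  rw [Finset.sum_comm]
  have hstep : ∀ j ∈ range k, (∑ m ∈ range k, z ^ j * (w * φ ^ m) ^ (k - 1 - j))
      = if j = k - 1 then (k : ℂ) * z ^ (k-1) else 0 := by
    intro j hj
    rw [mem_range] at hj
    have : ∀ m ∈ range k, z ^ j * (w * φ ^ m) ^ (k - 1 - j)
        = z ^ j * w ^ (k-1-j) * (φ ^ (k-1-j)) ^ m := by
      intro m hm
      rw [mul_pow, ← pow_mul, mul_comm m (k-1-j), pow_mul]
      ring
    rw [Finset.sum_congr rfl this, ← Finset.mul_sum]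
    by_cases hcase : j = k - 1
    · subst hcase
      simp only [Nat.sub_self, pow_zero, if_true]
      simp [Finset.sum_const, Finset.card_range]
      ring
    · have hr0 : 0 < k - 1 - j := by omega
      have hr1 : k - 1 - j < k := by omega
      rw [if_neg hcase, geom0 (by rw [← pow_mul, mul_comm, pow_mul, hφk, one_pow])
        (hφr _ hr0 hr1), mul_zero]
  rw [Finset.sum_congr rfl hstep, Finset.sum_ite_eq' (range k) (k-1)
    (fun _ => (k:ℂ) * z ^ (k-1))]
  rw [if_pos (mem_range.mpr (by omega))]

lemma pair_inv {k : ℕ} {φ : ℂ} (hφk : φ ^ k = 1)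
    (hφr : ∀ r : ℕ, 0 < r → r < k → φ ^ r ≠ 1)
    {a : ℕ} (ha0 : 0 < a) (hak : a < k) :
    (1 - φ ^ a)⁻¹ + (1 - φ ^ (k - a))⁻¹ = 1 := by
  have hxy : φ ^ a * φ ^ (k - a) = 1 := by
    rw [← pow_add]; rw [show a + (k - a) = k by omega, hφk]
  have hx1 : (1:ℂ) - φ ^ a ≠ 0 := by
    intro h; exact hφr a ha0 hak (by linear_combination -h)
  have hy1 : (1:ℂ) - φ ^ (k - a) ≠ 0 := by
    intro h; exact hφr (k - a) (by omega) (by omega) (by linear_combination -h)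
  have key : (1 - φ ^ a) + (1 - φ ^ (k - a)) = (1 - φ ^ a) * (1 - φ ^ (k - a)) := by
    linear_combination -hxy
  rw [inv_add_inv hx1 hy1, key, div_self (mul_ne_zero hx1 hy1)]

lemma sumD {k : ℕ} (hk : 1 ≤ k) {φ : ℂ} (hφk : φ ^ k = 1)
    (hφr : ∀ r : ℕ, 0 < r → r < k → φ ^ r ≠ 1) :
    ∑ m ∈ range k, (1 - φ ^ m)⁻¹ = ((k : ℂ) - 1) / 2 := by
  obtain ⟨n, rfl⟩ : ∃ n, k = n + 1 := ⟨k - 1, by omega⟩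
  rw [Finset.sum_range_succ']
  simp only [pow_zero, sub_self, inv_zero, add_zero]
  set f : ℕ → ℂ := fun m => (1 - φ ^ m)⁻¹ with hf
  have hrefl : ∑ j ∈ range n, f (n - j) = ∑ j ∈ range n, f (j + 1) := by
    rw [← Finset.sum_range_reflect (fun j => f (j + 1)) n]
    apply Finset.sum_congr rfl
    intro j hj
    rw [mem_range] at hj
    congr 1
    omega
  have hpair : ∀ j ∈ range n, f (j + 1) + f (n - j) = 1 := by
    intro j hj
    rw [mem_range] at hj
    have := pair_inv hφk hφr (a := j + 1) (by omega) (by omega)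
    rw [show n + 1 - (j + 1) = n - j by omega] at this
    exact this
  have h2 : (2:ℂ) * ∑ j ∈ range n, f (j + 1) = n := by
    calc (2:ℂ) * ∑ j ∈ range n, f (j + 1)
        = ∑ j ∈ range n, f (j + 1) + ∑ j ∈ range n, f (n - j) := by rw [hrefl]; ring
      _ = ∑ j ∈ range n, (f (j + 1) + f (n - j)) := by rw [Finset.sum_add_distrib]
      _ = ∑ j ∈ range n, (1:ℂ) := Finset.sum_congr rfl hpair
      _ = n := by simp
  have hhalf : ∑ j ∈ range n, f (j + 1) = (n : ℂ) / 2 := by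
    field_simp; linear_combination h2
  rw [hhalf]
  push_cast
  ring

lemma shift_inv {k : ℕ} [NeZero k] {φ : ℂ} (hφk : φ ^ k = 1) (a b : ℂ) (m₀ : Fin k) :
    ∑ m : Fin k, (a - b * φ ^ (m : ℕ))⁻¹
      = ∑ m : Fin k, (a - b * (φ ^ (m₀ : ℕ) * φ ^ (m : ℕ)))⁻¹ := by
  have hmod : ∀ x : ℕ, φ ^ (x % k) = φ ^ x := by
    intro x
    conv_rhs => rw [← Nat.div_add_mod x k, pow_add, pow_mul, hφk, one_pow, one_mul]
  rw [← Equiv.sum_comp (Equiv.addLeft m₀)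
    (fun m : Fin k => (a - b * φ ^ (m : ℕ))⁻¹)]
  apply Finset.sum_congr rfl
  intro m _
  have hval : φ ^ (((Equiv.addLeft m₀) m : Fin k) : ℕ) = φ ^ (m₀ : ℕ) * φ ^ (m : ℕ) := by
    show φ ^ ((m₀ + m : Fin k) : ℕ) = _
    rw [Fin.val_add, hmod (↑m₀ + ↑m), pow_add]
  rw [hval]

lemma exists_pq (k : ℕ) (hk : 2 ≤ k) (e : ℝ) (he1 : -1 ≤ e) (hek : 2 * e < (k:ℝ) - 1) :
    ∃ p q : ℝ, 0 < p ∧ 0 < q ∧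
      p ^ 2 + ((k:ℝ) - 1) / 2 + e - k * p ^ k / (p ^ k + q ^ k) = 0 ∧
      q ^ 2 - ((k:ℝ) - 1) / 2 + e + k * q ^ k / (p ^ k + q ^ k) = 0 := by
  have hk1 : (1:ℝ) ≤ (k:ℝ) := by exact_mod_cast Nat.one_le_of_lt hk
  set F : ℝ → ℝ := fun s =>
    (k : ℝ) * (Real.sqrt (s+1)) ^ k / ((Real.sqrt (s+1)) ^ k + (Real.sqrt s) ^ k)
      - s - ((k:ℝ) + 1) / 2 - e with hF
  have hone : ∀ s : ℝ, 0 ≤ s → (1:ℝ) ≤ (Real.sqrt (s+1)) ^ k := by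
    intro s hs
    apply one_le_pow₀
    have := Real.sqrt_le_sqrt (show (1:ℝ) ≤ s + 1 by linarith)
    simpa using this
  have hdenpos : ∀ s : ℝ, 0 ≤ s →
      (0:ℝ) < (Real.sqrt (s+1)) ^ k + (Real.sqrt s) ^ k := by
    intro s hs
    have := hone s hs
    have h2 : (0:ℝ) ≤ (Real.sqrt s) ^ k := pow_nonneg (Real.sqrt_nonneg s) k
    linarith
  have hcont : ContinuousOn F (Set.Icc 0 ((k:ℝ) + 2)) := by
    have hc1 : Continuous fun s : ℝ => (Real.sqrt (s+1)) ^ k :=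
      (Real.continuous_sqrt.comp (continuous_id.add continuous_const)).pow k
    have hc2 : Continuous fun s : ℝ => (Real.sqrt s) ^ k := Real.continuous_sqrt.pow k
    apply ContinuousOn.sub
    apply ContinuousOn.sub
    apply ContinuousOn.sub
    · exact ContinuousOn.div (continuous_const.mul hc1).continuousOn
        (hc1.add hc2).continuousOn (fun s hs => (hdenpos s hs.1).ne')
    · exact continuousOn_id
    · exact continuousOn_const
    · exact continuousOn_const
  have hF0 : F 0 = ((k:ℝ) - 1) / 2 - e := by
    have h0 : Real.sqrt (0 + 1 : ℝ) = 1 := by norm_num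
    have h1 : Real.sqrt (0:ℝ) = 0 := Real.sqrt_zero
    simp only [hF, h0, h1, one_pow]
    rw [zero_pow (by omega)]
    ring
  have hF0pos : 0 < F 0 := by rw [hF0]; linarith
  have hFbneg : F ((k:ℝ) + 2) < 0 := by
    have hs : (0:ℝ) ≤ (k:ℝ) + 2 := by linarith
    have hd := hdenpos _ hs
    have hle : (k:ℝ) * (Real.sqrt ((k:ℝ)+2+1)) ^ k /
        ((Real.sqrt ((k:ℝ)+2+1)) ^ k + (Real.sqrt ((k:ℝ)+2)) ^ k) ≤ (k:ℝ) := by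
      rw [div_le_iff₀ hd]
      have h2 : (0:ℝ) ≤ (Real.sqrt ((k:ℝ)+2)) ^ k := pow_nonneg (Real.sqrt_nonneg _) k
      nlinarith [hone _ hs]
    simp only [hF]
    linarith
  have hmem : (0:ℝ) ∈ Set.Icc (F ((k:ℝ)+2)) (F 0) := ⟨le_of_lt hFbneg, le_of_lt hF0pos⟩
  obtain ⟨s, hs, hFs⟩ := intermediate_value_Icc' (by linarith : (0:ℝ) ≤ (k:ℝ)+2) hcont hmem
  have hs0 : 0 < s := by
    rcases lt_or_eq_of_le hs.1 with h | h
    · exact h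
    · exfalso; rw [← h] at hFs; linarith
  refine ⟨Real.sqrt (s+1), Real.sqrt s, Real.sqrt_pos.mpr (by linarith),
    Real.sqrt_pos.mpr hs0, ?_, ?_⟩
  all_goals {
    set p := Real.sqrt (s+1) with hp
    set q := Real.sqrt s with hq
    have hp2 : p ^ 2 = s + 1 := Real.sq_sqrt (by linarith)
    have hq2 : q ^ 2 = s := Real.sq_sqrt (le_of_lt hs0)
    have hd := hdenpos s (le_of_lt hs0)
    have hE : (k:ℝ) * p ^ k / (p ^ k + q ^ k) = s + ((k:ℝ)+1)/2 + e := by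
      simp only [hF] at hFs
      linarith [hFs]
    have hsum : (k:ℝ) * p ^ k / (p ^ k + q ^ k) + (k:ℝ) * q ^ k / (p ^ k + q ^ k)
        = (k:ℝ) := by
      rw [← add_div, show (k:ℝ) * p ^ k + (k:ℝ) * q ^ k = (k:ℝ) * (p^k + q^k) by ring,
        mul_div_assoc, div_self hd.ne', mul_one]
    linarith
  }


lemma final_pos (p u P D c e kc : ℂ) (hp : p ≠ 0) (hu : u ≠ 0) (hD : D ≠ 0)
    (hE : (p^2 + c + e) * D = kc * P) :
    p * u⁻¹ + ((p*u)⁻¹ * c + -(kc * P / ((p*u) * D)) + e/(p*u)) = 0 := by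
  have h1 : kc * P / ((p*u) * D) = (p^2 + c + e) / (p * u) := by
    rw [← hE]
    exact mul_div_mul_right _ _ hD
  have h2 : p * u⁻¹ = p^2/(p*u) := by
    rw [eq_div_iff (mul_ne_zero hp hu)]
    field_simp
  have h3 : (p*u)⁻¹ * c = c/(p*u) := inv_mul_eq_div _ _
  rw [h1, h2, h3, ← neg_div]
  simp only [← add_div]
  rw [div_eq_zero_iff]
  left
  ring

lemma final_neg (q u Q D c e kc : ℂ) (hq : q ≠ 0) (hu : u ≠ 0) (hD : D ≠ 0)
    (hE : (q^2 - c + e) * D = -(kc * Q)) :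
    q * u⁻¹ + (kc * Q / ((q*u) * D) + -((q*u)⁻¹ * c) + e/(q*u)) = 0 := by
  have h1 : kc * Q / ((q*u) * D) = (-(q^2 - c + e)) / (q * u) := by
    have h0 : kc * Q = (-(q^2 - c + e)) * D := by linear_combination hE
    rw [h0]
    exact mul_div_mul_right _ _ hD
  have h2 : q * u⁻¹ = q^2/(q*u) := by
    rw [eq_div_iff (mul_ne_zero hq hu)]
    field_simp
  have h3 : -((q*u)⁻¹ * c) = (-c)/(q*u) := by
    rw [inv_mul_eq_div, neg_div]
  rw [h1, h2, h3]
  simp only [← add_div]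
  rw [div_eq_zero_iff]
  left
  ring

end CHMhelpers

open Complex Finset in
/-- (Exotic CHM configurations, one positive orbit) Suppose `k ≥ 2` and `ε₀ ∈ {-1, 0}`,
or `k ≥ 4` and `ε₀ = 1`.  Then there exist reals `p, q > 0` such that the configuration
of points `p · φ^m` with charge `+1`, `q · e^{iπ/k} · φ^m` with charge `-1`
(`φ = e^{2πi/k}`, `m = 0, …, k-1`), together with the origin with charge `ε₀` when
`ε₀ ≠ 0`, is balanced: the force vanishes at every orbit point, and at the origin
whenever the origin belongs to the configuration (when `ε₀ = 0` the origin carries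
charge `0` and does not affect the other forces). -/
theorem exotic_CHM_one_orbit_balanced (k : ℕ) (ε₀ : ℂ)
    (hcase : (2 ≤ k ∧ (ε₀ = -1 ∨ ε₀ = 0)) ∨ (4 ≤ k ∧ ε₀ = 1)) :
    ∃ p q : ℝ, 0 < p ∧ 0 < q ∧
      ((∀ j : (Fin k ⊕ Fin k),
          force
            (fun i : (Fin k ⊕ Fin k) ⊕ Unit =>
              match i with
              | Sum.inl (Sum.inl m) =>
                  (p : ℂ) * Complex.exp (2 * Real.pi * Complex.I / k) ^ (m : ℕ)
              | Sum.inl (Sum.inr m) =>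
                  (q : ℂ) * Complex.exp (Real.pi * Complex.I / k) *
                    Complex.exp (2 * Real.pi * Complex.I / k) ^ (m : ℕ)
              | Sum.inr _ => 0)
            (fun i =>
              match i with
              | Sum.inl (Sum.inl _) => 1
              | Sum.inl (Sum.inr _) => -1
              | Sum.inr _ => ε₀)
            (Sum.inl j) = 0) ∧
        (ε₀ ≠ 0 →
          force
            (fun i : (Fin k ⊕ Fin k) ⊕ Unit =>
              match i with
              | Sum.inl (Sum.inl m) =>
                  (p : ℂ) * Complex.exp (2 * Real.pi * Complex.I / k) ^ (m : ℕ)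
              | Sum.inl (Sum.inr m) =>
                  (q : ℂ) * Complex.exp (Real.pi * Complex.I / k) *
                    Complex.exp (2 * Real.pi * Complex.I / k) ^ (m : ℕ)
              | Sum.inr _ => 0)
            (fun i =>
              match i with
              | Sum.inl (Sum.inl _) => 1
              | Sum.inl (Sum.inr _) => -1
              | Sum.inr _ => ε₀)
            (Sum.inr ()) = 0)) := by
  -- extract hk, e
  obtain ⟨hk, e, he, he1, hek⟩ :
      2 ≤ k ∧ ∃ e : ℝ, (e:ℂ) = ε₀ ∧ -1 ≤ e ∧ 2 * e < (k:ℝ) - 1 := by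
    rcases hcase with ⟨hk2, h | h⟩ | ⟨hk4, h⟩
    · refine ⟨hk2, -1, by rw [h]; norm_num, le_refl _, ?_⟩
      have : (2:ℝ) ≤ (k:ℝ) := by exact_mod_cast hk2
      linarith
    · refine ⟨hk2, 0, by rw [h]; norm_num, by norm_num, ?_⟩
      have : (2:ℝ) ≤ (k:ℝ) := by exact_mod_cast hk2
      linarith
    · refine ⟨by omega, 1, by rw [h]; norm_num, by norm_num, ?_⟩
      have : (4:ℝ) ≤ (k:ℝ) := by exact_mod_cast hk4
      linarith
  haveI : NeZero k := ⟨by omega⟩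
  obtain ⟨p, q, hp, hq, hE1, hE2⟩ := exists_pq k hk e he1 hek
  set φ : ℂ := Complex.exp (2 * Real.pi * Complex.I / k) with hφ
  set ψ : ℂ := Complex.exp (Real.pi * Complex.I / k) with hψ
  have hk1 : 1 ≤ k := by omega
  have hφk : φ ^ k = 1 := phi_pow_k' hk1
  have hψk : ψ ^ k = -1 := psi_pow_k' hk1
  have hφr : ∀ r : ℕ, 0 < r → r < k → φ ^ r ≠ 1 := fun r h0 h1 => phi_pow_ne_one' h0 h1
  have hφ0 : φ ≠ 0 := Complex.exp_ne_zero _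
  have hψ0 : ψ ≠ 0 := Complex.exp_ne_zero _
  have hp0 : (p:ℂ) ≠ 0 := Complex.ofReal_ne_zero.mpr hp.ne'
  have hq0 : (q:ℂ) ≠ 0 := Complex.ofReal_ne_zero.mpr hq.ne'
  have hdR : p ^ k + q ^ k ≠ 0 := by positivity
  have hPQ : (p:ℂ)^k + (q:ℂ)^k ≠ 0 := by
    intro h
    apply hdR
    exact_mod_cast h
  have hconjφ : (starRingEnd ℂ) φ = φ⁻¹ := by
    rw [hφ, ← Complex.exp_conj, ← Complex.exp_neg]
    congr 1
    simp [map_div₀, Complex.conj_I, map_ofNat]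
    ring
  have hconjψ : (starRingEnd ℂ) ψ = ψ⁻¹ := by
    rw [hψ, ← Complex.exp_conj, ← Complex.exp_neg]
    congr 1
    simp [map_div₀, Complex.conj_I, map_ofNat]
    ring
  -- complex versions of the equations
  have hE1' : (p^2 + ((k:ℝ)-1)/2 + e) * (p^k + q^k) = k * p^k := by
    have h1 : p^2 + ((k:ℝ)-1)/2 + e = k * p^k / (p^k + q^k) := by linarith
    rw [h1, div_mul_cancel₀ _ hdR]
  have hE2' : (q^2 - ((k:ℝ)-1)/2 + e) * (p^k + q^k) = -(k * q^k) := by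
    have h1 : q^2 - ((k:ℝ)-1)/2 + e = -(k * q^k / (p^k + q^k)) := by linarith
    rw [h1, neg_mul, div_mul_cancel₀ _ hdR]
  have hE1C : ((p:ℂ)^2 + ((k:ℂ)-1)/2 + ε₀) * ((p:ℂ)^k + (q:ℂ)^k) = k * (p:ℂ)^k := by
    have := congrArg (fun x : ℝ => (x:ℂ)) hE1'
    push_cast at this
    rw [he] at this
    exact this
  have hE2C : ((q:ℂ)^2 - ((k:ℂ)-1)/2 + ε₀) * ((p:ℂ)^k + (q:ℂ)^k) = -(k * (q:ℂ)^k) := by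
    have := congrArg (fun x : ℝ => (x:ℂ)) hE2'
    push_cast at this
    rw [he] at this
    exact this
  refine ⟨p, q, hp, hq, ?_, ?_⟩
  · rintro (m₀ | m₀)
    · -- positive point
      simp only [force]
      rw [Finset.sum_erase _ (by simp)]
      rw [Fintype.sum_sum_type, Fintype.sum_sum_type]
      simp only [Fintype.sum_unique]
      have hu0 : φ ^ (m₀:ℕ) ≠ 0 := pow_ne_zero _ hφ0
      have huk : (φ ^ (m₀:ℕ)) ^ k = 1 := by
        rw [← pow_mul, mul_comm, pow_mul, hφk, one_pow]
      have hconj1 : (starRingEnd ℂ) ((p:ℂ) * φ ^ (m₀:ℕ)) = (p:ℂ) * (φ ^ (m₀:ℕ))⁻¹ := by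
        rw [map_mul, Complex.conj_ofReal, map_pow, hconjφ, inv_pow]
      have hA : ∑ x : Fin k, 1 / ((p:ℂ) * φ^(m₀:ℕ) - (p:ℂ) * φ^(x:ℕ))
          = ((p:ℂ) * φ^(m₀:ℕ))⁻¹ * (((k:ℂ)-1)/2) := by
        simp only [one_div]
        rw [shift_inv hφk ((p:ℂ) * φ^(m₀:ℕ)) (p:ℂ) m₀]
        have hterm : ∀ x : Fin k, ((p:ℂ)*φ^(m₀:ℕ) - (p:ℂ)*(φ^(m₀:ℕ)*φ^(x:ℕ)))⁻¹
            = ((p:ℂ)*φ^(m₀:ℕ))⁻¹ * (1 - φ^(x:ℕ))⁻¹ := by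
          intro x
          rw [← mul_inv]
          congr 1
          ring
        rw [Finset.sum_congr rfl (fun x _ => hterm x), ← Finset.mul_sum]
        rw [Fin.sum_univ_eq_sum_range (fun m => (1 - φ^m)⁻¹) k, sumD hk1 hφk hφr]
      have hzw : ((p:ℂ) * φ^(m₀:ℕ))^k ≠ ((q:ℂ) * ψ)^k := by
        rw [mul_pow, huk, mul_one, mul_pow, hψk]
        intro h
        apply hPQ
        rw [h]
        ring
      have hz1 : ((p:ℂ) * φ^(m₀:ℕ))^(k-1)
          = ((p:ℂ) * φ^(m₀:ℕ))^k * ((p:ℂ)*φ^(m₀:ℕ))⁻¹ := by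
        have hstep : ((p:ℂ) * φ^(m₀:ℕ))^k
            = ((p:ℂ)*φ^(m₀:ℕ))^(k-1) * ((p:ℂ)*φ^(m₀:ℕ)) := by
          rw [← pow_succ, Nat.sub_add_cancel hk1]
        rw [hstep]
        field_simp
      have hzk : ((p:ℂ) * φ^(m₀:ℕ))^k = (p:ℂ)^k := by rw [mul_pow, huk, mul_one]
      have hwk : ((q:ℂ) * ψ)^k = -(q:ℂ)^k := by rw [mul_pow, hψk, mul_neg_one]
      have hB : ∑ x : Fin k, -1 / ((p:ℂ) * φ^(m₀:ℕ) - (q:ℂ) * ψ * φ^(x:ℕ))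
          = -((k:ℂ) * (p:ℂ)^k / (((p:ℂ) * φ^(m₀:ℕ)) * ((p:ℂ)^k + (q:ℂ)^k))) := by
        simp only [neg_div, one_div]
        rw [Finset.sum_neg_distrib]
        rw [Fin.sum_univ_eq_sum_range
          (fun m => ((p:ℂ) * φ^(m₀:ℕ) - (q:ℂ) * ψ * φ^m)⁻¹) k]
        rw [sumB hk1 hφk hφr hzw]
        rw [hz1, hzk, hwk, sub_neg_eq_add]
        simp only [div_eq_mul_inv, mul_inv]
        ring
      rw [hconj1, hA, hB, sub_zero]
      exact final_pos (p:ℂ) (φ^(m₀:ℕ)) ((p:ℂ)^k) ((p:ℂ)^k + (q:ℂ)^k)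
        (((k:ℂ)-1)/2) ε₀ (k:ℂ) hp0 hu0 hPQ hE1C
    · -- negative point
      simp only [force]
      rw [Finset.sum_erase _ (by simp)]
      rw [Fintype.sum_sum_type, Fintype.sum_sum_type]
      simp only [Fintype.sum_unique]
      rw [mul_assoc (q:ℂ) ψ (φ^(m₀:ℕ))]
      have hu0 : ψ * φ ^ (m₀:ℕ) ≠ 0 := mul_ne_zero hψ0 (pow_ne_zero _ hφ0)
      have hmk : (φ ^ (m₀:ℕ)) ^ k = 1 := by
        rw [← pow_mul, mul_comm, pow_mul, hφk, one_pow]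
      have huk : (ψ * φ ^ (m₀:ℕ)) ^ k = -1 := by
        rw [mul_pow, hψk, hmk, mul_one]
      have hconj2 : (starRingEnd ℂ) ((q:ℂ) * (ψ * φ ^ (m₀:ℕ)))
          = (q:ℂ) * (ψ * φ ^ (m₀:ℕ))⁻¹ := by
        rw [map_mul, map_mul, Complex.conj_ofReal, hconjψ, map_pow, hconjφ, inv_pow,
          mul_inv]
      have hzk2 : ((q:ℂ) * (ψ * φ^(m₀:ℕ)))^k = -(q:ℂ)^k := by
        rw [mul_pow, huk, mul_neg_one]
      have hzw2 : ((q:ℂ) * (ψ * φ^(m₀:ℕ)))^k ≠ (p:ℂ)^k := by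
        rw [hzk2]
        intro h
        apply hPQ
        rw [← h]
        ring
      have hz1 : ((q:ℂ) * (ψ * φ^(m₀:ℕ)))^(k-1)
          = ((q:ℂ) * (ψ * φ^(m₀:ℕ)))^k * ((q:ℂ) * (ψ * φ^(m₀:ℕ)))⁻¹ := by
        have hstep : ((q:ℂ) * (ψ * φ^(m₀:ℕ)))^k
            = ((q:ℂ) * (ψ * φ^(m₀:ℕ)))^(k-1) * ((q:ℂ) * (ψ * φ^(m₀:ℕ))) := by
          rw [← pow_succ, Nat.sub_add_cancel hk1]
        rw [hstep]
        field_simp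
      have hC : ∑ x : Fin k, -1 / ((q:ℂ) * (ψ * φ^(m₀:ℕ)) - (q:ℂ) * ψ * φ^(x:ℕ))
          = -(((q:ℂ) * (ψ * φ^(m₀:ℕ)))⁻¹ * (((k:ℂ)-1)/2)) := by
        simp only [neg_div, one_div]
        rw [Finset.sum_neg_distrib]
        congr 1
        rw [shift_inv hφk ((q:ℂ) * (ψ * φ^(m₀:ℕ))) ((q:ℂ) * ψ) m₀]
        have hterm : ∀ x : Fin k,
            ((q:ℂ) * (ψ * φ^(m₀:ℕ)) - (q:ℂ) * ψ * (φ^(m₀:ℕ) * φ^(x:ℕ)))⁻¹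
            = ((q:ℂ) * (ψ * φ^(m₀:ℕ)))⁻¹ * (1 - φ^(x:ℕ))⁻¹ := by
          intro x
          rw [← mul_inv]
          congr 1
          ring
        rw [Finset.sum_congr rfl (fun x _ => hterm x), ← Finset.mul_sum]
        rw [Fin.sum_univ_eq_sum_range (fun m => (1 - φ^m)⁻¹) k, sumD hk1 hφk hφr]
      have hD2 : ∑ x : Fin k, 1 / ((q:ℂ) * (ψ * φ^(m₀:ℕ)) - (p:ℂ) * φ^(x:ℕ))
          = (k:ℂ) * (q:ℂ)^k / (((q:ℂ) * (ψ * φ^(m₀:ℕ))) * ((p:ℂ)^k + (q:ℂ)^k)) := by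
        simp only [one_div]
        rw [Fin.sum_univ_eq_sum_range
          (fun m => ((q:ℂ) * (ψ * φ^(m₀:ℕ)) - (p:ℂ) * φ^m)⁻¹) k]
        rw [sumB hk1 hφk hφr hzw2]
        rw [hz1, hzk2]
        rw [show -(q:ℂ)^k - (p:ℂ)^k = -((p:ℂ)^k + (q:ℂ)^k) from by ring, div_neg]
        simp only [div_eq_mul_inv, mul_inv]
        ring
      rw [hconj2, hC, hD2, sub_zero]
      exact final_neg (q:ℂ) (ψ * φ^(m₀:ℕ)) ((q:ℂ)^k) ((p:ℂ)^k + (q:ℂ)^k)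
        (((k:ℂ)-1)/2) ε₀ (k:ℂ) hq0 hu0 hPQ hE2C
  · -- origin
    intro _
    simp only [force]
    rw [Finset.sum_erase _ (by simp)]
    rw [Fintype.sum_sum_type, Fintype.sum_sum_type]
    simp only [Fintype.sum_unique]
    have hφinv1 : φ⁻¹ ≠ 1 := by
      rw [ne_eq, inv_eq_one]
      intro h
      exact hφr 1 one_pos (by omega) (by rw [pow_one, h])
    have hφinvk : (φ⁻¹) ^ k = 1 := by rw [inv_pow, hφk, inv_one]
    have hS1 : ∑ x : Fin k, 1 / ((0:ℂ) - (p:ℂ) * φ^(x:ℕ)) = 0 := by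
      have hterm : ∀ x : Fin k, (1:ℂ) / ((0:ℂ) - (p:ℂ) * φ^(x:ℕ))
          = -(p:ℂ)⁻¹ * (φ⁻¹)^(x:ℕ) := by
        intro x
        rw [zero_sub, one_div, inv_neg, mul_inv, inv_pow]
        ring
      rw [Finset.sum_congr rfl (fun x _ => hterm x), ← Finset.mul_sum]
      rw [Fin.sum_univ_eq_sum_range (fun m => (φ⁻¹)^m) k, geom0 hφinvk hφinv1, mul_zero]
    have hS2 : ∑ x : Fin k, -1 / ((0:ℂ) - (q:ℂ) * ψ * φ^(x:ℕ)) = 0 := by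
      have hterm : ∀ x : Fin k, (-1:ℂ) / ((0:ℂ) - (q:ℂ) * ψ * φ^(x:ℕ))
          = ((q:ℂ) * ψ)⁻¹ * (φ⁻¹)^(x:ℕ) := by
        intro x
        rw [neg_div, one_div, zero_sub, inv_neg, neg_neg, mul_inv, inv_pow]
      rw [Finset.sum_congr rfl (fun x _ => hterm x), ← Finset.mul_sum]
      rw [Fin.sum_univ_eq_sum_range (fun m => (φ⁻¹)^m) k, geom0 hφinvk hφinv1, mul_zero]
    rw [hS1, hS2]
    simp
end
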